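/- arXiv:0808.4156 — 6 statements merged into one kernel-verified Lean document; each statement's English description precedes it below -/
import Mathlib

section
/- Let P be a stochastic matrix on a nonempty finite state space S, and let μ and ν be probability distributions on S. Then for every integer t ≥ 0, ‖μP^t − νP^t‖₁ ≤ ‖μ − ν‖₁ · δ(P)^t. -/
/-- The ℓ¹ distance between two vectors on a finite index set. -/
noncomputable def l1 {S : Type*} [Fintype S] (u v : S → ℝ) : ℝ :=
  ∑ k, |u k - v k|

/-- A stochastic matrix: nonnegative entries, rows summing to 1. -/
def IsStochastic {S : Type*} [Fintype S] (P : Matrix S S ℝ) : Prop :=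
  (∀ i k, 0 ≤ P i k) ∧ ∀ i, ∑ k, P i k = 1

/-- A probability distribution (row vector) on a finite state space. -/
def IsDist {S : Type*} [Fintype S] (μ : S → ℝ) : Prop :=
  (∀ k, 0 ≤ μ k) ∧ ∑ k, μ k = 1

/-- Dobrushin's ergodic coefficient: the maximum total-variation distance
between two rows of `P`. -/
noncomputable def dobrushin {S : Type*} [Fintype S] (P : Matrix S S ℝ) : ℝ :=
  ⨆ p : S × S, l1 (P p.1) (P p.2) / 2

lemma row_tv_le_dobrushin {S : Type*} [Fintype S] (P : Matrix S S ℝ) (i j : S) :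
    l1 (P i) (P j) / 2 ≤ dobrushin P :=
  le_ciSup (f := fun p : S × S => l1 (P p.1) (P p.2) / 2)
    (Set.Finite.bddAbove (Set.finite_range _)) (i, j)

lemma dobrushin_nonneg {S : Type*} [Fintype S] [Nonempty S] (P : Matrix S S ℝ) :
    0 ≤ dobrushin P := by
  obtain ⟨i⟩ := ‹Nonempty S›
  have h := row_tv_le_dobrushin P i i
  simpa [l1] using h

lemma contraction {S : Type*} [Fintype S] [Nonempty S] (P : Matrix S S ℝ)
    (hP : IsStochastic P) (φ : S → ℝ) (h0 : ∑ i, φ i = 0) :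
    ∑ k, |Matrix.vecMul φ P k| ≤ dobrushin P * ∑ i, |φ i| := by
  classical
  set φp : S → ℝ := fun i => max (φ i) 0 with hφp
  set φm : S → ℝ := fun i => max (-φ i) 0 with hφm
  have hsub : ∀ i, φp i - φm i = φ i := fun i => max_zero_sub_max_neg_zero_eq_self (φ i)
  have habs : ∀ i, φp i + φm i = |φ i| := fun i => max_zero_add_max_neg_zero_eq_abs_self (φ i)
  have hpnn : ∀ i, 0 ≤ φp i := fun i => le_max_right _ _
  have hmnn : ∀ i, 0 ≤ φm i := fun i => le_max_right _ _
  set c : ℝ := ∑ i, φp i with hc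
  have hcm : ∑ i, φm i = c := by
    have : ∑ i, (φp i - φm i) = 0 := by
      simp only [hsub]; exact h0
    have := Finset.sum_sub_distrib (f := φp) (g := φm) (s := Finset.univ) ▸ this
    linarith [this]
  have hcnn : 0 ≤ c := Finset.sum_nonneg fun i _ => hpnn i
  have habs_sum : ∑ i, |φ i| = 2 * c := by
    have : ∑ i, |φ i| = ∑ i, (φp i + φm i) := by
      simp only [habs]
    rw [this, Finset.sum_add_distrib, hcm]; ring
  have hvm : ∀ k, Matrix.vecMul φ P k = ∑ i, φ i * P i k := by
    intro k; simp [Matrix.vecMul, dotProduct]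
  rcases eq_or_lt_of_le hcnn with hc0 | hcpos
  · -- c = 0, so φ = 0
    have hz : ∀ i, φ i = 0 := by
      intro i
      have h1 : φp i = 0 :=
        le_antisymm (by
          have := Finset.single_le_sum (f := φp) (fun j _ => hpnn j) (Finset.mem_univ i)
          linarith [this]) (hpnn i)
      have h2 : φm i = 0 :=
        le_antisymm (by
          have := Finset.single_le_sum (f := φm) (fun j _ => hmnn j) (Finset.mem_univ i)
          rw [hcm] at this; linarith) (hmnn i)
      rw [← hsub i, h1, h2, sub_zero]
    have : ∀ k, Matrix.vecMul φ P k = 0 := by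
      intro k; rw [hvm k]; apply Finset.sum_eq_zero; intro i _; rw [hz i]; ring
    simp only [this, abs_zero, Finset.sum_const_zero, hz, habs_sum, ← hc0]
    simp
  · -- c > 0
    have key : ∀ k, c * Matrix.vecMul φ P k
        = ∑ i, ∑ j, φp i * φm j * (P i k - P j k) := by
      intro k
      have e1 : ∑ i, ∑ j, φp i * φm j * (P i k - P j k)
          = (∑ i, φp i * P i k) * (∑ j, φm j) - (∑ j, φm j * P j k) * (∑ i, φp i) := by
        simp only [mul_sub, Finset.sum_sub_distrib]
        congr 1
        · rw [Finset.sum_mul]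
          apply Finset.sum_congr rfl; intro i _
          rw [Finset.mul_sum]
          apply Finset.sum_congr rfl; intro j _; ring
        · rw [Finset.sum_comm, Finset.sum_mul]
          apply Finset.sum_congr rfl; intro j _
          rw [Finset.mul_sum]
          apply Finset.sum_congr rfl; intro i _; ring
      rw [e1, hcm, ← hc, hvm, Finset.mul_sum, Finset.sum_mul, Finset.sum_mul,
        ← Finset.sum_sub_distrib]
      exact Finset.sum_congr rfl fun i _ => by rw [← hsub i]; ring
    have bound : c * ∑ k, |Matrix.vecMul φ P k| ≤ c * (dobrushin P * (2 * c)) := by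
      calc c * ∑ k, |Matrix.vecMul φ P k| = ∑ k, |c * Matrix.vecMul φ P k| := by
            rw [Finset.mul_sum]
            exact Finset.sum_congr rfl fun k _ => by
              rw [abs_mul, abs_of_pos hcpos]
        _ = ∑ k, |∑ i, ∑ j, φp i * φm j * (P i k - P j k)| := by
            exact Finset.sum_congr rfl fun k _ => by rw [key k]
        _ ≤ ∑ k, ∑ i, ∑ j, φp i * φm j * |P i k - P j k| := by
            apply Finset.sum_le_sum; intro k _
            calc |∑ i, ∑ j, φp i * φm j * (P i k - P j k)|
                ≤ ∑ i, |∑ j, φp i * φm j * (P i k - P j k)| := Finset.abs_sum_le_sum_abs _ _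
              _ ≤ ∑ i, ∑ j, φp i * φm j * |P i k - P j k| := by
                  apply Finset.sum_le_sum; intro i _
                  calc |∑ j, φp i * φm j * (P i k - P j k)|
                      ≤ ∑ j, |φp i * φm j * (P i k - P j k)| := Finset.abs_sum_le_sum_abs _ _
                    _ = ∑ j, φp i * φm j * |P i k - P j k| := by
                        apply Finset.sum_congr rfl; intro j _
                        rw [abs_mul, abs_of_nonneg (mul_nonneg (hpnn i) (hmnn j))]
        _ = ∑ i, ∑ j, φp i * φm j * l1 (P i) (P j) := by
            rw [Finset.sum_comm]
            apply Finset.sum_congr rfl; intro i _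
            rw [Finset.sum_comm]
            apply Finset.sum_congr rfl; intro j _
            rw [l1, Finset.mul_sum]
        _ ≤ ∑ i, ∑ j, φp i * φm j * (2 * dobrushin P) := by
            apply Finset.sum_le_sum; intro i _
            apply Finset.sum_le_sum; intro j _
            apply mul_le_mul_of_nonneg_left _ (mul_nonneg (hpnn i) (hmnn j))
            have := row_tv_le_dobrushin P i j
            linarith
        _ = c * (dobrushin P * (2 * c)) := by
            have h2 : ∑ i, ∑ j, φp i * φm j * (2 * dobrushin P)
                = ((∑ i, φp i) * ∑ j, φm j) * (2 * dobrushin P) := by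
              rw [Finset.sum_mul_sum, Finset.sum_mul]
              apply Finset.sum_congr rfl; intro i _; rw [Finset.sum_mul]
            rw [h2, hcm, ← hc]; ring
    have := le_of_mul_le_mul_left (by linarith [bound] : c * ∑ k, |Matrix.vecMul φ P k| ≤ c * (dobrushin P * (2 * c))) hcpos
    rw [habs_sum]
    linarith

lemma sum_vecMul_eq {S : Type*} [Fintype S] (P : Matrix S S ℝ) (hP : IsStochastic P)
    (ψ : S → ℝ) : ∑ k, Matrix.vecMul ψ P k = ∑ i, ψ i := by
  simp only [Matrix.vecMul, dotProduct]
  rw [Finset.sum_comm]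
  apply Finset.sum_congr rfl; intro i _
  rw [← Finset.mul_sum, hP.2 i, mul_one]

lemma sum_vecMul_pow_eq {S : Type*} [Fintype S] [DecidableEq S] (P : Matrix S S ℝ)
    (hP : IsStochastic P) (ψ : S → ℝ) (t : ℕ) :
    ∑ k, Matrix.vecMul ψ (P ^ t) k = ∑ i, ψ i := by
  induction t with
  | zero => simp [Matrix.vecMul_one]
  | succ s ihs =>
      rw [pow_succ, ← Matrix.vecMul_vecMul, sum_vecMul_eq P hP, ihs]

/-- Convergence rate in terms of Dobrushin's coefficient:
`‖μP^t − νP^t‖₁ ≤ ‖μ − ν‖₁ · δ(P)^t`. -/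
theorem l1_vecMul_pow_le_of_isStochastic {S : Type*} [Fintype S] [Nonempty S]
    [DecidableEq S] (P : Matrix S S ℝ) (hP : IsStochastic P)
    (μ ν : S → ℝ) (hμ : IsDist μ) (hν : IsDist ν) (t : ℕ) :
    l1 (Matrix.vecMul μ (P ^ t)) (Matrix.vecMul ν (P ^ t)) ≤ l1 μ ν * dobrushin P ^ t := by
  induction t with
  | zero => simp [Matrix.vecMul_one, l1]
  | succ t ih =>
      set a := Matrix.vecMul μ (P ^ t) with ha
      set b := Matrix.vecMul ν (P ^ t) with hb
      set φ : S → ℝ := fun i => a i - b i with hφ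
      have hsum : ∑ i, φ i = 0 := by
        simp only [hφ, Finset.sum_sub_distrib, ha, hb,
          sum_vecMul_pow_eq P hP μ t, sum_vecMul_pow_eq P hP ν t, hμ.2, hν.2, sub_self]
      have hstep : l1 (Matrix.vecMul μ (P ^ (t + 1))) (Matrix.vecMul ν (P ^ (t + 1)))
          = ∑ k, |Matrix.vecMul φ P k| := by
        rw [pow_succ, ← Matrix.vecMul_vecMul, ← Matrix.vecMul_vecMul, ← ha, ← hb, l1]
        apply Finset.sum_congr rfl; intro k _
        congr 1
        have : Matrix.vecMul φ P k = Matrix.vecMul a P k - Matrix.vecMul b P k := by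
          simp only [Matrix.vecMul, dotProduct, hφ, sub_mul,
            Finset.sum_sub_distrib]
        rw [this]
      rw [hstep]
      calc ∑ k, |Matrix.vecMul φ P k| ≤ dobrushin P * ∑ i, |φ i| :=
            contraction P hP φ hsum
        _ = (l1 a b) * dobrushin P := by rw [l1]; ring
        _ ≤ (l1 μ ν * dobrushin P ^ t) * dobrushin P :=
            mul_le_mul_of_nonneg_right ih (dobrushin_nonneg P)
        _ = l1 μ ν * dobrushin P ^ (t + 1) := by ring
end

section
/- Sufficient condition for strong ergodicity: let (P^{(t)})_{t≥0} be a weakly ergodic nonhomogeneous Markov chain on a nonempty finite state space S, and suppose there exists a sequence of probability distributions (π^{(t)})_{t≥0} on S such that π^{(t)} P^{(t)} = π^{(t)} for every t and Σ_{t=0}^∞ ‖π^{(t)} − π^{(t+1)}‖₁ < ∞. Then the chain is strongly ergodic: there exists a probability distribution π on S such that for every probability distribution μ on S and every n1 ≥ 0, lim_{n2→∞} ‖μP^{(n1,n2)} − π‖₁ = 0. -/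
open Filter

/-- The product `P^{(n1,n2)} = P^{(n1)} P^{(n1+1)} ⋯ P^{(n2−1)}` of the transition
matrices of a nonhomogeneous Markov chain. -/
noncomputable def Pprod {S : Type*} [Fintype S] [DecidableEq S]
    (P : ℕ → Matrix S S ℝ) (n1 n2 : ℕ) : Matrix S S ℝ :=
  ((List.range (n2 - n1)).map fun t => P (n1 + t)).prod

/-- Weak ergodicity of a nonhomogeneous Markov chain: the initial distribution
is forgotten in the limit. -/
def WeaklyErgodic {S : Type*} [Fintype S] [DecidableEq S]
    (P : ℕ → Matrix S S ℝ) : Prop :=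
  ∀ μ ν : S → ℝ, IsDist μ → IsDist ν → ∀ n1 : ℕ,
    Tendsto (fun n2 => l1 (Matrix.vecMul μ (Pprod P n1 n2)) (Matrix.vecMul ν (Pprod P n1 n2)))
      atTop (nhds 0)

set_option linter.unusedSectionVars false

section Aux

open Matrix

variable {S : Type*} [Fintype S] [DecidableEq S]

lemma l1_nonneg (u v : S → ℝ) : 0 ≤ l1 u v :=
  Finset.sum_nonneg fun _ _ => abs_nonneg _

lemma l1_self (u : S → ℝ) : l1 u u = 0 := by simp [l1]

lemma l1_triangle (u v w : S → ℝ) : l1 u w ≤ l1 u v + l1 v w := by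
  rw [l1, l1, l1, ← Finset.sum_add_distrib]
  exact Finset.sum_le_sum fun k _ => abs_sub_le _ _ _

lemma l1_contract {P : Matrix S S ℝ} (hP : IsStochastic P) (u v : S → ℝ) :
    l1 (vecMul u P) (vecMul v P) ≤ l1 u v := by
  have key : ∀ k, |vecMul u P k - vecMul v P k| ≤ ∑ i, |u i - v i| * P i k := by
    intro k
    have h1 : vecMul u P k - vecMul v P k = ∑ i, (u i - v i) * P i k := by
      simp [Matrix.vecMul, dotProduct, sub_mul, Finset.sum_sub_distrib]
    rw [h1]
    calc |∑ i, (u i - v i) * P i k| ≤ ∑ i, |(u i - v i) * P i k| :=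
          Finset.abs_sum_le_sum_abs _ _
      _ = ∑ i, |u i - v i| * P i k := by
          refine Finset.sum_congr rfl fun i _ => ?_
          rw [abs_mul, abs_of_nonneg (hP.1 i k)]
  calc l1 (vecMul u P) (vecMul v P) ≤ ∑ k, ∑ i, |u i - v i| * P i k :=
        Finset.sum_le_sum fun k _ => key k
    _ = ∑ i, |u i - v i| * ∑ k, P i k := by
        rw [Finset.sum_comm]; simp [Finset.mul_sum]
    _ = l1 u v := by simp [hP.2, l1]

lemma isDist_vecMul {P : Matrix S S ℝ} (hP : IsStochastic P) {μ : S → ℝ} (hμ : IsDist μ) :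
    IsDist (vecMul μ P) := by
  have happ : ∀ k, vecMul μ P k = ∑ i, μ i * P i k := by
    intro k; simp [Matrix.vecMul, dotProduct]
  constructor
  · intro k
    rw [happ]
    exact Finset.sum_nonneg fun i _ => mul_nonneg (hμ.1 i) (hP.1 i k)
  · calc ∑ k, vecMul μ P k = ∑ k, ∑ i, μ i * P i k := by simp [happ]
      _ = ∑ i, μ i * ∑ k, P i k := by rw [Finset.sum_comm]; simp [Finset.mul_sum]
      _ = 1 := by simp [hP.2, hμ.2]

lemma Pprod_self (P : ℕ → Matrix S S ℝ) (n : ℕ) : Pprod P n n = 1 := by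
  simp [Pprod]

lemma Pprod_succ (P : ℕ → Matrix S S ℝ) (n1 j : ℕ) :
    Pprod P n1 (n1 + j + 1) = Pprod P n1 (n1 + j) * P (n1 + j) := by
  have h1 : n1 + j + 1 - n1 = j + 1 := by omega
  have h2 : n1 + j - n1 = j := by omega
  rw [Pprod, Pprod, h1, h2, List.range_succ, List.map_append, List.prod_append]
  simp

lemma Pprod_one_of_le (P : ℕ → Matrix S S ℝ) {n1 n2 : ℕ} (h : n2 ≤ n1) :
    Pprod P n1 n2 = 1 := by
  simp [Pprod, Nat.sub_eq_zero_of_le h]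

lemma Pprod_split (P : ℕ → Matrix S S ℝ) {n1 m : ℕ} (h : n1 ≤ m) (j : ℕ) :
    Pprod P n1 (m + j) = Pprod P n1 m * Pprod P m (m + j) := by
  induction j with
  | zero => simp [Pprod_self]
  | succ j ih =>
    have hm : m + j = n1 + (m - n1 + j) := by omega
    rw [← Nat.add_assoc, show m + j + 1 = n1 + (m - n1 + j) + 1 by omega,
      Pprod_succ, ← hm, show m + j + 1 = m + j + 1 from rfl]
    rw [show m + j = m + j from rfl] at ih
    rw [ih, Matrix.mul_assoc, ← Pprod_succ P m j]

lemma isDist_vecMul_Pprod (P : ℕ → Matrix S S ℝ) (hP : ∀ t, IsStochastic (P t))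
    {μ : S → ℝ} (hμ : IsDist μ) (n1 n2 : ℕ) :
    IsDist (vecMul μ (Pprod P n1 n2)) := by
  rcases le_or_gt n2 n1 with h | h
  · rw [Pprod_one_of_le P h, Matrix.vecMul_one]; exact hμ
  · obtain ⟨j, rfl⟩ := Nat.exists_eq_add_of_le h.le
    induction j with
    | zero => rw [Nat.add_zero, Pprod_self, Matrix.vecMul_one]; exact hμ
    | succ j ih =>
      rw [← Nat.add_assoc, Pprod_succ, ← Matrix.vecMul_vecMul]
      exact isDist_vecMul (hP _) (by
        rcases Nat.eq_zero_or_pos j with hj | hj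
        · subst hj; rw [Nat.add_zero, Pprod_self, Matrix.vecMul_one]; exact hμ
        · exact ih (by omega))

lemma stat_est (P : ℕ → Matrix S S ℝ) (hP : ∀ t, IsStochastic (P t))
    (π : ℕ → S → ℝ) (hstat : ∀ t, vecMul (π t) (P t) = π t) (m j : ℕ) :
    l1 (vecMul (π m) (Pprod P m (m + j))) (π (m + j)) ≤
      ∑ t ∈ Finset.range j, l1 (π (m + t)) (π (m + t + 1)) := by
  induction j with
  | zero => simp [Pprod_self, Matrix.vecMul_one, l1_self]
  | succ j ih =>
    rw [Finset.sum_range_succ, ← Nat.add_assoc, Pprod_succ, ← Matrix.vecMul_vecMul]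
    set B := vecMul (π m) (Pprod P m (m + j)) with hB
    have hcon : l1 (vecMul B (P (m + j))) (π (m + j)) ≤ l1 B (π (m + j)) := by
      have := l1_contract (hP (m + j)) B (π (m + j))
      rwa [hstat (m + j)] at this
    calc l1 (vecMul B (P (m + j))) (π (m + j + 1))
        ≤ l1 (vecMul B (P (m + j))) (π (m + j)) + l1 (π (m + j)) (π (m + j + 1)) :=
          l1_triangle _ _ _
      _ ≤ l1 B (π (m + j)) + l1 (π (m + j)) (π (m + j + 1)) :=
          add_le_add_left hcon _
      _ ≤ _ := add_le_add_left ih _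

lemma l1_tele (π : ℕ → S → ℝ) (m j : ℕ) :
    l1 (π m) (π (m + j)) ≤ ∑ t ∈ Finset.range j, l1 (π (m + t)) (π (m + t + 1)) := by
  induction j with
  | zero => simp [l1_self]
  | succ j ih =>
    rw [Finset.sum_range_succ, ← Nat.add_assoc]
    calc l1 (π m) (π (m + j + 1)) ≤ l1 (π m) (π (m + j)) + l1 (π (m + j)) (π (m + j + 1)) :=
          l1_triangle _ _ _
      _ ≤ _ := add_le_add_left ih _

end Aux

theorem stronglyErgodic_of_weaklyErgodic' {S : Type*} [Fintype S] [Nonempty S]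
    [DecidableEq S] (P : ℕ → Matrix S S ℝ) (hP : ∀ t, IsStochastic (P t))
    (hweak : ∀ μ ν : S → ℝ, IsDist μ → IsDist ν → ∀ n1 : ℕ,
      Tendsto (fun n2 => l1 (Matrix.vecMul μ (Pprod P n1 n2)) (Matrix.vecMul ν (Pprod P n1 n2)))
        atTop (nhds 0))
    (π : ℕ → S → ℝ) (hπ : ∀ t, IsDist (π t))
    (hstat : ∀ t, Matrix.vecMul (π t) (P t) = π t)
    (hsum : Summable (fun t => l1 (π t) (π (t + 1)))) :
    ∃ πlim : S → ℝ, IsDist πlim ∧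
      ∀ μ : S → ℝ, IsDist μ → ∀ n1 : ℕ,
        Tendsto (fun n2 => l1 (Matrix.vecMul μ (Pprod P n1 n2)) πlim) atTop (nhds 0) := by
  set f : ℕ → ℝ := fun t => l1 (π t) (π (t + 1)) with hf
  have hf0 : ∀ t, 0 ≤ f t := fun t => l1_nonneg _ _
  set T : ℕ → ℝ := fun m => ∑' t, f (t + m) with hT
  have hTtend : Tendsto T atTop (nhds 0) := tendsto_sum_nat_add f
  have hT0 : ∀ m, 0 ≤ T m := fun m => tsum_nonneg fun t => hf0 _
  have hsumtail : ∀ m, Summable (fun t => f (t + m)) := fun m => (summable_nat_add_iff m).2 hsum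
  have hpartial : ∀ m j, ∑ t ∈ Finset.range j, f (m + t) ≤ T m := by
    intro m j
    have : ∑ t ∈ Finset.range j, f (m + t) = ∑ t ∈ Finset.range j, f (t + m) := by
      refine Finset.sum_congr rfl fun t _ => by rw [Nat.add_comm]
    rw [this]
    exact Summable.sum_le_tsum _ (fun t _ => hf0 _) (hsumtail m)
  -- construct πlim
  have hconv : ∀ k : S, ∃ L, Tendsto (fun n => π n k) atTop (nhds L) := by
    intro k
    have habs : Summable (fun t => |π (t + 1) k - π t k|) := by
      refine Summable.of_nonneg_of_le (fun t => abs_nonneg _) (fun t => ?_) hsum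
      rw [abs_sub_comm]
      exact Finset.single_le_sum (f := fun j => |π t j - π (t + 1) j|)
        (fun j _ => abs_nonneg _) (Finset.mem_univ k)
    have hg : Summable (fun t => π (t + 1) k - π t k) := Summable.of_abs habs
    refine ⟨π 0 k + ∑' t, (π (t + 1) k - π t k), ?_⟩
    have h1 := hg.hasSum.tendsto_sum_nat
    have h2 := h1.const_add (π 0 k)
    refine h2.congr fun n => ?_
    rw [Finset.sum_range_sub (fun t => π t k) n]; ring
  choose πlim hlim using hconv
  have hl1tend : ∀ u : S → ℝ, Tendsto (fun n => l1 u (π n)) atTop (nhds (l1 u πlim)) := by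
    intro u
    have : ∀ k : S, Tendsto (fun n => |u k - π n k|) atTop (nhds (|u k - πlim k|)) :=
      fun k => (tendsto_const_nhds.sub (hlim k)).abs
    exact tendsto_finset_sum Finset.univ fun k _ => this k
  have hdistlim : ∀ m, l1 (π m) πlim ≤ T m := by
    intro m
    refine le_of_tendsto (hl1tend (π m)) ?_
    filter_upwards [eventually_ge_atTop m] with n hn
    obtain ⟨j, rfl⟩ := Nat.exists_eq_add_of_le hn
    exact (l1_tele π m j).trans (hpartial m j)
  have hDist : IsDist πlim := by
    constructor
    · intro k
      exact ge_of_tendsto (hlim k) (Eventually.of_forall fun n => (hπ n).1 k)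
    · have h1 : Tendsto (fun n => ∑ k, π n k) atTop (nhds (∑ k, πlim k)) :=
        tendsto_finset_sum Finset.univ fun k _ => hlim k
      have h2 : Tendsto (fun _ : ℕ => (1 : ℝ)) atTop (nhds (∑ k, πlim k)) :=
        h1.congr fun n => (hπ n).2
      exact tendsto_nhds_unique h2 tendsto_const_nhds
  refine ⟨πlim, hDist, ?_⟩
  intro μ hμ n1
  rw [Metric.tendsto_atTop]
  intro ε hε
  have h4 : (0 : ℝ) < ε / 4 := by linarith
  obtain ⟨m0, hm0⟩ := Metric.tendsto_atTop.mp hTtend (ε / 4) h4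
  set m := max m0 n1 with hm
  have hTsmall : ∀ s, m ≤ s → T s < ε / 4 := by
    intro s hs
    have := hm0 s (le_trans (le_max_left _ _) hs)
    rwa [Real.dist_eq, sub_zero, abs_of_nonneg (hT0 s)] at this
  have hn1m : n1 ≤ m := le_max_right _ _
  set μ' := Matrix.vecMul μ (Pprod P n1 m) with hμ'def
  have hμ' : IsDist μ' := isDist_vecMul_Pprod P hP hμ n1 m
  obtain ⟨N, hN⟩ := Metric.tendsto_atTop.mp (hweak μ' (π m) hμ' (hπ m) m) (ε / 4) h4
  refine ⟨max N m, fun n2 hn2 => ?_⟩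
  have hmn2 : m ≤ n2 := le_trans (le_max_right _ _) hn2
  have hNn2 : N ≤ n2 := le_trans (le_max_left _ _) hn2
  obtain ⟨j, rfl⟩ := Nat.exists_eq_add_of_le hmn2
  have hA : Matrix.vecMul μ (Pprod P n1 (m + j)) = Matrix.vecMul μ' (Pprod P m (m + j)) := by
    rw [hμ'def, Matrix.vecMul_vecMul, ← Pprod_split P hn1m j]
  set B := Matrix.vecMul (π m) (Pprod P m (m + j)) with hBdef
  have h1 : l1 (Matrix.vecMul μ' (Pprod P m (m + j))) B < ε / 4 := by
    have := hN (m + j) hNn2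
    rwa [Real.dist_eq, sub_zero, abs_of_nonneg (l1_nonneg _ _)] at this
  have h2 : l1 B (π (m + j)) < ε / 4 :=
    lt_of_le_of_lt ((stat_est P hP π hstat m j).trans (hpartial m j)) (hTsmall m le_rfl)
  have h3 : l1 (π (m + j)) πlim < ε / 4 :=
    lt_of_le_of_lt (hdistlim (m + j)) (hTsmall (m + j) (Nat.le_add_right _ _))
  rw [Real.dist_eq, sub_zero, abs_of_nonneg (l1_nonneg _ _), hA]
  calc l1 (Matrix.vecMul μ' (Pprod P m (m + j))) πlim
      ≤ l1 (Matrix.vecMul μ' (Pprod P m (m + j))) B + l1 B πlim := l1_triangle _ _ _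
    _ ≤ l1 (Matrix.vecMul μ' (Pprod P m (m + j))) B +
        (l1 B (π (m + j)) + l1 (π (m + j)) πlim) :=
        add_le_add_right (l1_triangle _ _ _) _
    _ < ε := by linarith

/-- Sufficient condition for strong ergodicity: a weakly ergodic nonhomogeneous
Markov chain with stationary distributions `π^{(t)}` of each `P^{(t)}` satisfying
`Σ_t ‖π^{(t)} − π^{(t+1)}‖₁ < ∞` is strongly ergodic. -/
theorem stronglyErgodic_of_weaklyErgodic {S : Type*} [Fintype S] [Nonempty S]
    [DecidableEq S] (P : ℕ → Matrix S S ℝ) (hP : ∀ t, IsStochastic (P t))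
    (hweak : WeaklyErgodic P)
    (π : ℕ → S → ℝ) (hπ : ∀ t, IsDist (π t))
    (hstat : ∀ t, Matrix.vecMul (π t) (P t) = π t)
    (hsum : Summable (fun t => l1 (π t) (π (t + 1)))) :
    ∃ πlim : S → ℝ, IsDist πlim ∧
      ∀ μ : S → ℝ, IsDist μ → ∀ n1 : ℕ,
        Tendsto (fun n2 => l1 (Matrix.vecMul μ (Pprod P n1 n2)) πlim) atTop (nhds 0) := by
  exact stronglyErgodic_of_weaklyErgodic' P hP hweak π hπ hstat hsum
end

section
/- Let (β_t)_{t≥0} be any sequence of nonnegative reals and set P^{(t)} = P_{β_t}. For j ≥ 0 let β̄_j = (1/n) Σ_{t=jn}^{(j+1)n−1} β_t and let ε_n = ln n − (ln n!)/n (natural logarithms). Then for every j ≥ 0: (i) P^{(jn,(j+1)n)}(u,v) ≥ e^{−n(β̄_j Δ + ε_n)}/|A|ⁿ for every pair u, v ∈ Aⁿ, and (ii) the Dobrushin ergodic coefficient satisfies δ(P^{(jn,(j+1)n)}) ≤ 1 − e^{−n(β̄_j Δ + ε_n)}. -/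
open Filter

/-- The Gibbs-sampler (heat bath) transition matrix at inverse temperature `β`
for the energy `E` on the state space `Fin n → A`: a coordinate `i` is chosen
uniformly at random and resampled from the conditional Boltzmann distribution. -/
noncomputable def gibbs {A : Type*} [Fintype A] [DecidableEq A]
    (n : ℕ) (E : (Fin n → A) → ℝ) (β : ℝ) :
    Matrix (Fin n → A) (Fin n → A) ℝ := fun u v =>
  (∑ i : Fin n,
    if ∀ j, j ≠ i → v j = u j then
      Real.exp (-β * E v) / ∑ b : A, Real.exp (-β * E (Function.update u i b))
    else 0) / n

/-- The maximal change of the energy `E` when a single coordinate is modified. -/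
noncomputable def energySpan {A : Type*} [Fintype A] [DecidableEq A]
    (n : ℕ) (E : (Fin n → A) → ℝ) : ℝ :=
  ⨆ q : (Fin n → A) × Fin n × A × A,
    |E (Function.update q.1 q.2.1 q.2.2.1) - E (Function.update q.1 q.2.1 q.2.2.2)|

section Aux
set_option linter.unusedSectionVars false
set_option linter.unusedVariables false
variable {A : Type*} [Fintype A] [DecidableEq A] [Nonempty A]

lemma energySpan_bound (n : ℕ) (E : (Fin n → A) → ℝ) (w : Fin n → A) (i : Fin n) (a b : A) :
    |E (Function.update w i a) - E (Function.update w i b)| ≤ energySpan n E := by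
  unfold energySpan
  exact le_ciSup (Finite.bddAbove_range
    (fun q : (Fin n → A) × Fin n × A × A =>
      |E (Function.update q.1 q.2.1 q.2.2.1) - E (Function.update q.1 q.2.1 q.2.2.2)|))
    (⟨w, i, a, b⟩ : (Fin n → A) × Fin n × A × A)

lemma Zpos (n : ℕ) (E : (Fin n → A) → ℝ) (β : ℝ) (w : Fin n → A) (i : Fin n) :
    0 < ∑ b : A, Real.exp (-β * E (Function.update w i b)) :=
  Finset.sum_pos (fun b _ => Real.exp_pos _) Finset.univ_nonempty

lemma gibbs_nonneg (n : ℕ) (E : (Fin n → A) → ℝ) (β : ℝ) (u v : Fin n → A) :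
    0 ≤ gibbs n E β u v := by
  unfold gibbs
  apply div_nonneg _ (Nat.cast_nonneg n)
  refine Finset.sum_nonneg fun i _ => ?_
  split
  · exact div_nonneg (Real.exp_pos _).le (Zpos n E β u i).le
  · exact le_refl 0

lemma gibbs_term_ge (n : ℕ) (E : (Fin n → A) → ℝ) (β : ℝ) (hβ : 0 ≤ β)
    (w w' : Fin n → A) (i : Fin n) (h : ∀ j, j ≠ i → w' j = w j) :
    Real.exp (-β * energySpan n E) / (Fintype.card A : ℝ) ≤
      Real.exp (-β * E w') / ∑ b : A, Real.exp (-β * E (Function.update w i b)) := by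
  have hZ := Zpos n E β w i
  have hcard : (0 : ℝ) < Fintype.card A := by
    exact_mod_cast Fintype.card_pos
  rw [div_le_div_iff₀ hcard hZ]
  have hw' : w' = Function.update w i (w' i) := by
    funext j
    by_cases hj : j = i
    · subst hj; simp
    · simp [Function.update_of_ne hj, h j hj]
  calc Real.exp (-β * energySpan n E) * ∑ b : A, Real.exp (-β * E (Function.update w i b))
      = ∑ b : A, Real.exp (-β * energySpan n E) * Real.exp (-β * E (Function.update w i b)) := by
        rw [Finset.mul_sum]
    _ ≤ ∑ b : A, Real.exp (-β * E w') := by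
        refine Finset.sum_le_sum fun b _ => ?_
        rw [← Real.exp_add]
        apply Real.exp_le_exp.mpr
        have hb : E w' - E (Function.update w i b) ≤ energySpan n E := by
          have := energySpan_bound n E w i (w' i) b
          rw [← hw'] at this
          exact (abs_le.mp this).2
        nlinarith [hβ, hb]
    _ = Real.exp (-β * E w') * (Fintype.card A : ℝ) := by
        rw [Finset.sum_const, Finset.card_univ, nsmul_eq_mul, mul_comm]

lemma gibbs_ge_fiber (n : ℕ) (hn : 0 < n) (E : (Fin n → A) → ℝ) (β : ℝ) (hβ : 0 ≤ β)
    (w w' : Fin n → A) (F : Finset (Fin n))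
    (hF : ∀ i ∈ F, ∀ j, j ≠ i → w' j = w j) :
    (F.card : ℝ) * (Real.exp (-β * energySpan n E) / ((n : ℝ) * (Fintype.card A : ℝ))) ≤
      gibbs n E β w w' := by
  have hnpos : (0 : ℝ) < n := by exact_mod_cast hn
  unfold gibbs
  rw [le_div_iff₀ hnpos]
  have key : ∑ i ∈ F, Real.exp (-β * energySpan n E) / (Fintype.card A : ℝ) ≤
      ∑ i : Fin n,
        if ∀ j, j ≠ i → w' j = w j then
          Real.exp (-β * E w') / ∑ b : A, Real.exp (-β * E (Function.update w i b))
        else 0 := by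
    refine le_trans ?_ (Finset.sum_le_sum_of_subset_of_nonneg (Finset.subset_univ F) ?_)
    · refine Finset.sum_le_sum fun i hi => ?_
      rw [if_pos (hF i hi)]
      exact gibbs_term_ge n E β hβ w w' i (hF i hi)
    · intro i _ _
      split
      · exact div_nonneg (Real.exp_pos _).le (Zpos n E β w i).le
      · exact le_refl 0
  rw [Finset.sum_const, nsmul_eq_mul] at key
  calc (F.card : ℝ) * (Real.exp (-β * energySpan n E) / ((n : ℝ) * (Fintype.card A : ℝ))) * n
      = (F.card : ℝ) * (Real.exp (-β * energySpan n E) / (Fintype.card A : ℝ)) := by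
        field_simp
    _ ≤ _ := key

end Aux

section Aux2
set_option linter.unusedSectionVars false
variable {S : Type*} [Fintype S] [DecidableEq S]

lemma listProd_nonneg (l : List (Matrix S S ℝ)) (h : ∀ M ∈ l, ∀ a b, 0 ≤ M a b) :
    ∀ a b, 0 ≤ l.prod a b := by
  induction l with
  | nil =>
    intro a b
    simp only [List.prod_nil, Matrix.one_apply]
    split <;> norm_num
  | cons M l ih =>
    intro a b
    rw [List.prod_cons, Matrix.mul_apply]
    refine Finset.sum_nonneg fun c _ => mul_nonneg (h M (List.mem_cons_self) a c)
      (ih (fun N hN => h N (List.mem_cons_of_mem M hN)) c b)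

lemma listProd_rowsum (l : List (Matrix S S ℝ)) (h : ∀ M ∈ l, ∀ a, ∑ b, M a b = 1) :
    ∀ a, ∑ b, l.prod a b = 1 := by
  induction l with
  | nil =>
    intro a
    simp [Matrix.one_apply]
  | cons M l ih =>
    intro a
    simp only [List.prod_cons, Matrix.mul_apply]
    rw [Finset.sum_comm]
    have : ∀ c : S, ∑ b : S, M a c * l.prod c b = M a c := by
      intro c
      rw [← Finset.mul_sum, ih (fun N hN => h N (List.mem_cons_of_mem M hN)) c, mul_one]
    rw [Finset.sum_congr rfl (fun c _ => this c)]
    exact h M (List.mem_cons_self) a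

end Aux2

section Aux3
set_option linter.unusedSectionVars false
variable {A : Type*} [Fintype A] [DecidableEq A] [Nonempty A]

lemma gibbs_rowsum (n : ℕ) (hn : 0 < n) (E : (Fin n → A) → ℝ) (β : ℝ) (u : Fin n → A) :
    ∑ v, gibbs n E β u v = 1 := by
  unfold gibbs
  rw [← Finset.sum_div, Finset.sum_comm]
  have hone : ∀ i : Fin n,
      (∑ v : Fin n → A, if ∀ j, j ≠ i → v j = u j then
        Real.exp (-β * E v) / ∑ b : A, Real.exp (-β * E (Function.update u i b)) else 0) = 1 := by
    intro i
    have : (∑ v : Fin n → A, if ∀ j, j ≠ i → v j = u j then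
        Real.exp (-β * E v) / ∑ b : A, Real.exp (-β * E (Function.update u i b)) else 0) =
        ∑ b : A, Real.exp (-β * E (Function.update u i b)) /
          ∑ c : A, Real.exp (-β * E (Function.update u i c)) := by
      rw [← Finset.sum_filter]
      refine Finset.sum_bij' (fun v _ => v i) (fun b _ => Function.update u i b) ?_ ?_ ?_ ?_ ?_
      · intro v hv; exact Finset.mem_univ _
      · intro b hb
        simp only [Finset.mem_filter, Finset.mem_univ, true_and]
        intro j hj
        exact Function.update_of_ne hj b u
      · intro v hv
        simp only [Finset.mem_filter, Finset.mem_univ, true_and] at hv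
        funext j
        by_cases hj : j = i
        · subst hj; simp
        · simp [Function.update_of_ne hj, hv j hj]
      · intro b hb; simp
      · intro v hv
        simp only [Finset.mem_filter, Finset.mem_univ, true_and] at hv
        have hveq : Function.update u i (v i) = v := by
          funext j
          by_cases hj : j = i
          · subst hj; simp
          · simp [Function.update_of_ne hj, hv j hj]
        simp only [hveq]
    rw [this, ← Finset.sum_div, div_self (Zpos n E β u i).ne']
  rw [Finset.sum_congr rfl (fun i _ => hone i), Finset.sum_const, Finset.card_univ,
    Fintype.card_fin, nsmul_eq_mul, mul_one, div_self]
  exact_mod_cast hn.ne'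

end Aux3

section Aux4
set_option linter.unusedSectionVars false
set_option maxHeartbeats 1000000
variable {A : Type*} [Fintype A] [DecidableEq A] [Nonempty A]

lemma gibbs_key (n : ℕ) (hn : 0 < n) (E : (Fin n → A) → ℝ) (β : ℕ → ℝ) (hβ : ∀ t, 0 ≤ β t) :
    ∀ (k m : ℕ) (T : Finset (Fin n)) (_ : T.card = k) (w v : Fin n → A)
      (_ : ∀ j, j ∉ T → w j = v j),
    (k.factorial : ℝ) *
        ∏ t ∈ Finset.range k,
          (Real.exp (-(β (m + t)) * energySpan n E) / ((n : ℝ) * (Fintype.card A : ℝ))) ≤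
      (((List.range k).map fun t => gibbs n E (β (m + t))).prod) w v := by
  intro k
  induction k with
  | zero =>
    intro m T hT w v hw
    have hTe : T = ∅ := Finset.card_eq_zero.mp hT
    have hwv : w = v := funext fun j => hw j (by simp [hTe])
    subst hwv
    simp [Matrix.one_apply]
  | succ k ih =>
    intro m T hT w v hw
    -- split the list product
    rw [List.range_succ_eq_map, List.map_cons, List.prod_cons, List.map_map]
    have hcomp : ((fun t => gibbs n E (β (m + t))) ∘ Nat.succ) =
        fun t => gibbs n E (β (m + 1 + t)) := by
      funext t
      simp only [Function.comp_apply, Nat.succ_eq_add_one]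
      rw [show m + (t + 1) = m + 1 + t from by omega]
    rw [hcomp, Matrix.mul_apply]
    set Δ := energySpan n E with hΔ
    set c : ℕ → ℝ := fun t => Real.exp (-(β t) * Δ) / ((n : ℝ) * (Fintype.card A : ℝ)) with hc
    have hc0 : ∀ t, 0 ≤ c t := fun t => by
      apply div_nonneg (Real.exp_pos _).le
      positivity
    set N : Matrix (Fin n → A) (Fin n → A) ℝ :=
      (((List.range k).map fun t => gibbs n E (β (m + 1 + t))).prod) with hN
    have hNnn : ∀ a b, 0 ≤ N a b := by
      apply listProd_nonneg
      intro M hM a b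
      simp only [List.mem_map] at hM
      obtain ⟨t, -, rfl⟩ := hM
      exact gibbs_nonneg n E _ a b
    set B : ℝ := (k.factorial : ℝ) * ∏ t ∈ Finset.range k, c (m + 1 + t) with hB
    have hBnn : 0 ≤ B := by
      apply mul_nonneg (Nat.cast_nonneg _)
      exact Finset.prod_nonneg fun t _ => hc0 _
    set g : Fin n → (Fin n → A) := fun i => Function.update w i (v i) with hg
    -- IH applied to each i ∈ T
    have hIH : ∀ i ∈ T, B ≤ N (g i) v := by
      intro i hi
      refine ih (m + 1) (T.erase i) (by rw [Finset.card_erase_of_mem hi, hT]; rfl) (g i) v ?_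
      intro j hj
      by_cases hji : j = i
      · subst hji; simp [hg]
      · have hjT : j ∉ T := fun hjT => hj (Finset.mem_erase.mpr ⟨hji, hjT⟩)
        simp [hg, Function.update_of_ne hji, hw j hjT]
    -- LHS rewrite
    have hLHS : ((k + 1).factorial : ℝ) * ∏ t ∈ Finset.range (k + 1), c (m + t) =
        ∑ _i ∈ T, c m * B := by
      rw [Finset.sum_const, hT, nsmul_eq_mul]
      have hprod : ∏ t ∈ Finset.range (k + 1), c (m + t) =
          (∏ t ∈ Finset.range k, c (m + 1 + t)) * c m := by
        rw [Finset.prod_range_succ' (fun t => c (m + t)) k, Nat.add_zero]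
        congr 1
        exact Finset.prod_congr rfl fun t _ => by rw [show m + (t + 1) = m + 1 + t by omega]
      rw [hprod, Nat.factorial_succ, hB]
      push_cast
      ring
    rw [hLHS]
    calc ∑ _i ∈ T, c m * B
        ≤ ∑ i ∈ T, c m * N (g i) v := by
          refine Finset.sum_le_sum fun i hi => ?_
          exact mul_le_mul_of_nonneg_left (hIH i hi) (hc0 m)
      _ = ∑ w' : Fin n → A, ∑ i ∈ T.filter (fun i => g i = w'), c m * N (g i) v := by
          exact (Finset.sum_fiberwise_of_maps_to (fun i _ => Finset.mem_univ (g i)) _).symm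
      _ ≤ ∑ w' : Fin n → A, gibbs n E (β (m + 0)) w w' * N w' v := by
          refine Finset.sum_le_sum fun w' _ => ?_
          have hfib : ∀ i ∈ T.filter (fun i => g i = w'), ∀ j, j ≠ i → w' j = w j := by
            intro i hi j hj
            have := (Finset.mem_filter.mp hi).2
            rw [← this]
            simp [hg, Function.update_of_ne hj]
          have hgb := gibbs_ge_fiber n hn E (β (m + 0)) (hβ _) w w'
            (T.filter (fun i => g i = w')) hfib
          calc ∑ i ∈ T.filter (fun i => g i = w'), c m * N (g i) v
              = ∑ i ∈ T.filter (fun i => g i = w'), c m * N w' v := by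
                refine Finset.sum_congr rfl fun i hi => ?_
                rw [(Finset.mem_filter.mp hi).2]
            _ = ((T.filter (fun i => g i = w')).card : ℝ) * c m * N w' v := by
                rw [Finset.sum_const, nsmul_eq_mul]; ring
            _ ≤ gibbs n E (β (m + 0)) w w' * N w' v := by
                apply mul_le_mul_of_nonneg_right _ (hNnn w' v)
                simpa [hc, Nat.add_zero] using hgb
      _ = _ := rfl

end Aux4


section Aux5
set_option maxHeartbeats 1000000

lemma gibbs_arith (n : ℕ) (hn : 0 < n) (a : ℕ) (ha : 0 < a) (S D : ℝ) :
    (n.factorial : ℝ) * (Real.exp (-S * D) / (((n : ℝ) * (a : ℝ)) ^ n)) =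
      Real.exp (-(n : ℝ) * (S / n * D + (Real.log n - Real.log (Nat.factorial n) / n))) /
        (a : ℝ) ^ n := by
  have hn' : (n : ℝ) ≠ 0 := by exact_mod_cast hn.ne'
  have h1 : -(n : ℝ) * (S / n * D + (Real.log n - Real.log (Nat.factorial n) / n)) =
      (-S * D) + (Real.log (Nat.factorial n) - (n : ℝ) * Real.log n) := by
    field_simp
    ring
  rw [h1, Real.exp_add, Real.exp_sub, Real.exp_log (by exact_mod_cast n.factorial_pos),
    Real.exp_nat_mul, Real.exp_log (by exact_mod_cast hn)]
  have hnn : (0 : ℝ) < (n : ℝ) ^ n := by positivity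
  have han : (0 : ℝ) < (a : ℝ) ^ n := by positivity
  rw [mul_pow]
  field_simp
end Aux5

/-- Lower bound on the `n`-step block transition probabilities of the simulated
annealing chain, and the resulting upper bound on its Dobrushin ergodic
coefficient: with `β̄_j = (1/n) Σ_{t=jn}^{(j+1)n−1} β_t` and
`ε_n = ln n − (ln n!)/n`, every entry of `P^{(jn,(j+1)n)}` is at least
`e^{−n(β̄_j Δ + ε_n)}/|A|ⁿ`, whence `δ(P^{(jn,(j+1)n)}) ≤ 1 − e^{−n(β̄_j Δ + ε_n)}`. -/
theorem gibbs_block_bound {A : Type*} [Fintype A] [DecidableEq A] [Nonempty A]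
    (n : ℕ) (hn : 0 < n) (E : (Fin n → A) → ℝ)
    (β : ℕ → ℝ) (hβ : ∀ t, 0 ≤ β t) (j : ℕ) :
    (∀ u v : Fin n → A,
      Real.exp (-(n : ℝ) *
          ((∑ t ∈ Finset.Ico (j * n) ((j + 1) * n), β t) / n * energySpan n E +
            (Real.log n - Real.log (Nat.factorial n) / n))) / (Fintype.card A : ℝ) ^ n ≤
        Pprod (fun t => gibbs n E (β t)) (j * n) ((j + 1) * n) u v) ∧
    dobrushin (Pprod (fun t => gibbs n E (β t)) (j * n) ((j + 1) * n)) ≤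
      1 - Real.exp (-(n : ℝ) *
          ((∑ t ∈ Finset.Ico (j * n) ((j + 1) * n), β t) / n * energySpan n E +
            (Real.log n - Real.log (Nat.factorial n) / n))) := by
  have hA : 0 < Fintype.card A := Fintype.card_pos
  have hdiff : (j + 1) * n - j * n = n := by
    rw [add_mul, one_mul]
    omega
  have hP : Pprod (fun t => gibbs n E (β t)) (j * n) ((j + 1) * n) =
      ((List.range n).map fun t => gibbs n E (β (j * n + t))).prod := by
    unfold Pprod
    rw [hdiff]
  set Δ := energySpan n E with hΔ
  set S : ℝ := ∑ t ∈ Finset.Ico (j * n) ((j + 1) * n), β t with hS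
  have hSr : S = ∑ t ∈ Finset.range n, β (j * n + t) := by
    rw [hS, Finset.sum_Ico_eq_sum_range, hdiff]
  -- the lower bound value
  set e : ℝ := Real.exp (-(n : ℝ) * (S / n * Δ + (Real.log n - Real.log (Nat.factorial n) / n)))
    with he
  have hprodeq : (n.factorial : ℝ) *
      ∏ t ∈ Finset.range n,
        (Real.exp (-(β (j * n + t)) * Δ) / ((n : ℝ) * (Fintype.card A : ℝ))) =
      e / (Fintype.card A : ℝ) ^ n := by
    have h2 : ∏ t ∈ Finset.range n,
        (Real.exp (-(β (j * n + t)) * Δ) / ((n : ℝ) * (Fintype.card A : ℝ))) =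
        Real.exp (-S * Δ) / (((n : ℝ) * (Fintype.card A : ℝ)) ^ n) := by
      rw [Finset.prod_div_distrib, Finset.prod_const, Finset.card_range, ← Real.exp_sum]
      congr 2
      rw [hSr, ← Finset.sum_neg_distrib, Finset.sum_mul]
    rw [h2, he]
    exact gibbs_arith n hn (Fintype.card A) hA S Δ
  have hlow : ∀ u v : Fin n → A,
      e / (Fintype.card A : ℝ) ^ n ≤
        Pprod (fun t => gibbs n E (β t)) (j * n) ((j + 1) * n) u v := by
    intro u v
    rw [hP, ← hprodeq]
    have := gibbs_key n hn E β hβ n (j * n) Finset.univ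
      (by simp) u v (fun i hi => absurd (Finset.mem_univ i) hi)
    simpa using this
  refine ⟨hlow, ?_⟩
  -- Dobrushin bound
  have hrow : ∀ u, ∑ v, Pprod (fun t => gibbs n E (β t)) (j * n) ((j + 1) * n) u v = 1 := by
    intro u
    rw [hP]
    apply listProd_rowsum
    intro M hM a
    simp only [List.mem_map] at hM
    obtain ⟨t, -, rfl⟩ := hM
    exact gibbs_rowsum n hn E _ a
  have hcardS : (Fintype.card (Fin n → A) : ℝ) = (Fintype.card A : ℝ) ^ n := by
    rw [Fintype.card_fun, Fintype.card_fin]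
    push_cast
    ring
  have hAn : ((Fintype.card A : ℝ)) ^ n ≠ 0 := by positivity
  unfold dobrushin
  apply ciSup_le
  rintro ⟨u₁, u₂⟩
  rw [div_le_iff₀ (by norm_num : (0:ℝ) < 2)]
  set P := Pprod (fun t => gibbs n E (β t)) (j * n) ((j + 1) * n) with hPdef
  unfold l1
  calc ∑ k, |P u₁ k - P u₂ k|
      ≤ ∑ k, (P u₁ k + P u₂ k - 2 * (e / (Fintype.card A : ℝ) ^ n)) := by
        refine Finset.sum_le_sum fun k _ => ?_
        rw [abs_sub_le_iff]
        constructor <;> linarith [hlow u₁ k, hlow u₂ k]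
    _ = 2 - 2 * e := by
        rw [Finset.sum_sub_distrib, Finset.sum_add_distrib, hrow u₁, hrow u₂,
          Finset.sum_const, Finset.card_univ, nsmul_eq_mul, hcardS]
        field_simp
        ring
    _ = (1 - e) * 2 := by ring
end

section
/- If y ∉ H (i.e., y is not a global minimizer of E), then β ↦ π_β(y) is eventually nonincreasing: there exists β₀ ≥ 0 such that for all β₀ ≤ β₁ ≤ β₂, π_{β₂}(y) ≤ π_{β₁}(y). -/
/-- The Boltzmann distribution at inverse temperature `β` for the energy `E`. -/
noncomputable def boltzmann {A : Type*} [Fintype A]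
    (n : ℕ) (E : (Fin n → A) → ℝ) (β : ℝ) : (Fin n → A) → ℝ :=
  fun y => Real.exp (-β * E y) / ∑ z : Fin n → A, Real.exp (-β * E z)

/-- The set `H` of global minimizers of the energy `E`. -/
noncomputable def minimizers {A : Type*} [Fintype A]
    (n : ℕ) (E : (Fin n → A) → ℝ) : Finset (Fin n → A) :=
  Finset.univ.filter fun y => ∀ z, E y ≤ E z

private lemma term_lb {β₁ β₂ a : ℝ} (h0 : 0 ≤ β₁) (h12 : β₁ ≤ β₂) :
    -((β₂ - β₁) * |a|) ≤ Real.exp (β₂ * a) - Real.exp (β₁ * a) := by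
  rcases le_or_gt 0 a with ha | ha
  · have h1 : Real.exp (β₁ * a) ≤ Real.exp (β₂ * a) :=
      Real.exp_le_exp.2 (mul_le_mul_of_nonneg_right h12 ha)
    nlinarith [abs_nonneg a]
  · have habs : |a| = -a := abs_of_neg ha
    have hsplit : Real.exp (β₂ * a) = Real.exp (β₁ * a) * Real.exp ((β₂ - β₁) * a) := by
      rw [← Real.exp_add]; ring_nf
    have h1 : (β₂ - β₁) * a + 1 ≤ Real.exp ((β₂ - β₁) * a) := Real.add_one_le_exp _
    have h2 : Real.exp (β₁ * a) ≤ 1 := Real.exp_le_one_iff.2 (mul_nonpos_of_nonneg_of_nonpos h0 ha.le)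
    have h3 : (0:ℝ) < Real.exp (β₁ * a) := Real.exp_pos _
    have ht : (β₂ - β₁) * a ≤ 0 := mul_nonpos_of_nonneg_of_nonpos (by linarith) ha.le
    rw [habs, hsplit]
    nlinarith

/-- For `y` not a global minimizer of the energy, `β ↦ π_β(y)` is eventually
nonincreasing. -/
theorem boltzmann_eventually_antitone_off_minimizers {A : Type*} [Fintype A] [Nonempty A]
    (n : ℕ) (hn : 0 < n) (E : (Fin n → A) → ℝ) (y : Fin n → A)
    (hy : y ∉ minimizers n E) :
    ∃ β₀ : ℝ, 0 ≤ β₀ ∧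
      ∀ β₁ β₂ : ℝ, β₀ ≤ β₁ → β₁ ≤ β₂ → boltzmann n E β₂ y ≤ boltzmann n E β₁ y := by
  classical
  obtain ⟨z0, -, hz0⟩ := Finset.exists_min_image Finset.univ E ⟨y, Finset.mem_univ y⟩
  have hz0' : ∀ z, E z0 ≤ E z := fun z => hz0 z (Finset.mem_univ z)
  have hw : ∃ w, E w < E y := by
    simp only [minimizers, Finset.mem_filter, Finset.mem_univ, true_and] at hy
    push_neg at hy; exact hy
  obtain ⟨w, hw⟩ := hw
  set a : ℝ := E y - E z0 with ha_def
  have ha : 0 < a := by have := hz0' w; simp only [ha_def]; linarith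
  set S : ℝ := ∑ z : Fin n → A, |E y - E z| with hS_def
  have hS0 : 0 ≤ S := Finset.sum_nonneg fun z _ => abs_nonneg _
  refine ⟨max 0 (Real.log (S / a) / a), le_max_left _ _, ?_⟩
  intro β₁ β₂ hβ₀ h12
  have hβ₁0 : 0 ≤ β₁ := le_trans (le_max_left _ _) hβ₀
  have hΔ : 0 ≤ β₂ - β₁ := by linarith
  -- key inequality : S ≤ exp (β₁ * a) * a
  have hkey : S ≤ Real.exp (β₁ * a) * a := by
    have hlog : Real.log (S / a) ≤ β₁ * a := by
      have h1 : Real.log (S / a) / a ≤ β₁ := le_trans (le_max_right _ _) hβ₀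
      calc Real.log (S / a) = Real.log (S / a) / a * a := by field_simp
        _ ≤ β₁ * a := mul_le_mul_of_nonneg_right h1 ha.le
    have hSa : S / a ≤ Real.exp (β₁ * a) := by
      rcases le_or_gt (S / a) 0 with h | h
      · exact le_trans h (Real.exp_pos _).le
      · calc S / a = Real.exp (Real.log (S / a)) := (Real.exp_log h).symm
          _ ≤ Real.exp (β₁ * a) := Real.exp_le_exp.2 hlog
    calc S = S / a * a := by field_simp
      _ ≤ Real.exp (β₁ * a) * a := mul_le_mul_of_nonneg_right hSa ha.le
  -- sum inequality
  have hsum : 0 ≤ ∑ z : Fin n → A,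
      (Real.exp (β₂ * (E y - E z)) - Real.exp (β₁ * (E y - E z))) := by
    rw [← Finset.add_sum_erase _ _ (Finset.mem_univ z0)]
    have hz0term : (β₂ - β₁) * (Real.exp (β₁ * a) * a) ≤
        Real.exp (β₂ * (E y - E z0)) - Real.exp (β₁ * (E y - E z0)) := by
      have hsplit : Real.exp (β₂ * a) = Real.exp (β₁ * a) * Real.exp ((β₂ - β₁) * a) := by
        rw [← Real.exp_add]; ring_nf
      have h1 : (β₂ - β₁) * a + 1 ≤ Real.exp ((β₂ - β₁) * a) := Real.add_one_le_exp _
      have h3 : (0:ℝ) < Real.exp (β₁ * a) := Real.exp_pos _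
      show (β₂ - β₁) * (Real.exp (β₁ * a) * a) ≤ Real.exp (β₂ * a) - Real.exp (β₁ * a)
      rw [hsplit]; nlinarith
    have hrest : -((β₂ - β₁) * S) ≤
        ∑ z ∈ Finset.univ.erase z0,
          (Real.exp (β₂ * (E y - E z)) - Real.exp (β₁ * (E y - E z))) := by
      have h1 : ∀ z ∈ Finset.univ.erase z0,
          -((β₂ - β₁) * |E y - E z|) ≤
            Real.exp (β₂ * (E y - E z)) - Real.exp (β₁ * (E y - E z)) := by
        intro z _; exact term_lb hβ₁0 h12
      have h2 : ∑ z ∈ Finset.univ.erase z0, |E y - E z| ≤ S :=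
        Finset.sum_le_sum_of_subset_of_nonneg (Finset.erase_subset _ _)
          (fun z _ _ => abs_nonneg _)
      calc -((β₂ - β₁) * S)
          ≤ -((β₂ - β₁) * ∑ z ∈ Finset.univ.erase z0, |E y - E z|) := by
            have := mul_le_mul_of_nonneg_left h2 hΔ; linarith
        _ = ∑ z ∈ Finset.univ.erase z0, -((β₂ - β₁) * |E y - E z|) := by
            rw [Finset.mul_sum, ← Finset.sum_neg_distrib]
        _ ≤ _ := Finset.sum_le_sum h1
    have hmono : 1 ≤ Real.exp (β₁ * a) := Real.one_le_exp (mul_nonneg hβ₁0 ha.le)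
    nlinarith [mul_le_mul_of_nonneg_left hkey hΔ]
  -- conclusion
  have hD : ∀ β : ℝ, (0:ℝ) < ∑ z : Fin n → A, Real.exp (-β * E z) := fun β =>
    Finset.sum_pos (fun z _ => Real.exp_pos _) Finset.univ_nonempty
  show Real.exp (-β₂ * E y) / _ ≤ Real.exp (-β₁ * E y) / _
  rw [div_le_div_iff₀ (hD β₂) (hD β₁)]
  rw [Finset.mul_sum, Finset.mul_sum, ← sub_nonneg, ← Finset.sum_sub_distrib]
  have heq : ∀ z : Fin n → A,
      Real.exp (-β₁ * E y) * Real.exp (-β₂ * E z) -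
        Real.exp (-β₂ * E y) * Real.exp (-β₁ * E z) =
      Real.exp (-(β₁ + β₂) * E y) *
        (Real.exp (β₂ * (E y - E z)) - Real.exp (β₁ * (E y - E z))) := by
    intro z
    rw [mul_sub, ← Real.exp_add, ← Real.exp_add, ← Real.exp_add, ← Real.exp_add]
    ring_nf
  calc (0:ℝ) ≤ Real.exp (-(β₁ + β₂) * E y) *
      ∑ z : Fin n → A, (Real.exp (β₂ * (E y - E z)) - Real.exp (β₁ * (E y - E z))) :=
        mul_nonneg (Real.exp_pos _).le hsum
    _ = _ := by rw [Finset.mul_sum]; exact Finset.sum_congr rfl fun z _ => (heq z).symm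
end

section
/- If (β_t)_{t≥0} is a nondecreasing sequence of nonnegative reals with β_t → ∞, then Σ_{t=0}^∞ ‖π_{β_t} − π_{β_{t+1}}‖₁ < ∞. -/
open Filter

/-- Auxiliary antitone control function. -/
noncomputable def hAux (c b : ℝ) : ℝ :=
  if 0 ≤ c then (1 + Real.exp (b * c))⁻¹ else Real.exp (b * c)

lemma hAux_nonneg (c b : ℝ) : 0 ≤ hAux c b := by
  unfold hAux
  split <;> positivity

lemma hAux_antitone (c : ℝ) {b b' : ℝ} (hbb : b ≤ b') : hAux c b' ≤ hAux c b := by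
  unfold hAux
  split_ifs with hc
  · apply inv_anti₀ (by positivity)
    have : b * c ≤ b' * c := mul_le_mul_of_nonneg_right hbb hc
    linarith [Real.exp_le_exp.mpr this]
  · push_neg at hc
    exact Real.exp_le_exp.mpr (mul_le_mul_of_nonpos_right hbb hc.le)

lemma key_ineq {b b' c D D' : ℝ} (hbb : b ≤ b') (hD1 : 1 ≤ D) (hD1' : 1 ≤ D')
    (hD2 : c ≠ 0 → 1 + Real.exp (b * c) ≤ D)
    (hD2' : c ≠ 0 → 1 + Real.exp (b' * c) ≤ D') :
    |Real.exp (b' * c) - Real.exp (b * c)| / (D * D') ≤ hAux c b - hAux c b' := by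
  have hDpos : (0:ℝ) < D := lt_of_lt_of_le one_pos hD1
  have hDpos' : (0:ℝ) < D' := lt_of_lt_of_le one_pos hD1'
  rcases le_or_gt 0 c with hc | hc
  · rcases eq_or_ne c 0 with rfl | hc0
    · simp [hAux]
    · have hD2 := hD2 hc0
      have hD2' := hD2' hc0
      have hmul : b * c ≤ b' * c := mul_le_mul_of_nonneg_right hbb hc
      have hee : Real.exp (b * c) ≤ Real.exp (b' * c) := Real.exp_le_exp.mpr hmul
      rw [abs_of_nonneg (sub_nonneg.mpr hee)]
      have hpos : (0:ℝ) < 1 + Real.exp (b * c) := by positivity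
      have hpos' : (0:ℝ) < 1 + Real.exp (b' * c) := by positivity
      have step1 : (Real.exp (b' * c) - Real.exp (b * c)) / (D * D') ≤
          (Real.exp (b' * c) - Real.exp (b * c)) /
            ((1 + Real.exp (b * c)) * (1 + Real.exp (b' * c))) := by
        gcongr <;> linarith
      have step2 : (Real.exp (b' * c) - Real.exp (b * c)) /
            ((1 + Real.exp (b * c)) * (1 + Real.exp (b' * c))) =
          (1 + Real.exp (b * c))⁻¹ - (1 + Real.exp (b' * c))⁻¹ := by
        field_simp <;> ring
      rw [hAux, hAux, if_pos hc, if_pos hc]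
      linarith
  · have hmul : b' * c ≤ b * c := mul_le_mul_of_nonpos_right hbb hc.le
    have hee : Real.exp (b' * c) ≤ Real.exp (b * c) := Real.exp_le_exp.mpr hmul
    rw [abs_of_nonpos (sub_nonpos.mpr hee), neg_sub]
    have h1 : (1:ℝ) ≤ D * D' := by nlinarith
    have := div_le_self (by linarith : (0:ℝ) ≤ Real.exp (b*c) - Real.exp (b'*c)) h1
    rw [hAux, hAux, if_neg (not_le.mpr hc), if_neg (not_le.mpr hc)]
    linarith

lemma boltzmann_eq_inv {A : Type*} [Fintype A] (n : ℕ) (E : (Fin n → A) → ℝ)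
    (b : ℝ) (y : Fin n → A) :
    boltzmann n E b y = (∑ z : Fin n → A, Real.exp (b * (E y - E z)))⁻¹ := by
  unfold boltzmann
  have h : ∀ z : Fin n → A,
      Real.exp (b * (E y - E z)) = Real.exp (-b * E z) / Real.exp (-b * E y) := by
    intro z
    rw [← Real.exp_sub]
    ring_nf
  simp_rw [h]
  rw [← Finset.sum_div, inv_div]

/-- For a nondecreasing sequence of nonnegative inverse temperatures tending to
infinity, the successive Boltzmann distributions have summable ℓ¹ increments:
`Σ_t ‖π_{β_t} − π_{β_{t+1}}‖₁ < ∞`. -/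
theorem boltzmann_increments_summable {A : Type*} [Fintype A] [Nonempty A]
    (n : ℕ) (hn : 0 < n) (E : (Fin n → A) → ℝ)
    (β : ℕ → ℝ) (hβ0 : ∀ t, 0 ≤ β t) (hmono : Monotone β)
    (hβ : Tendsto β atTop atTop) :
    Summable fun t => l1 (boltzmann n E (β t)) (boltzmann n E (β (t + 1))) := by
  classical
  -- the control function H
  set H : ℝ → ℝ := fun b => ∑ y : Fin n → A, ∑ z : Fin n → A, hAux (E y - E z) b with hH
  have Hnonneg : ∀ b, 0 ≤ H b := by
    intro b
    apply Finset.sum_nonneg; intro y _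
    exact Finset.sum_nonneg fun z _ => hAux_nonneg _ _
  have Hanti : ∀ {b b' : ℝ}, b ≤ b' → H b' ≤ H b := by
    intro b b' hbb
    apply Finset.sum_le_sum; intro y _
    exact Finset.sum_le_sum fun z _ => hAux_antitone _ hbb
  -- per-coordinate estimate
  have coord : ∀ (b b' : ℝ), b ≤ b' → ∀ y : Fin n → A,
      |boltzmann n E b y - boltzmann n E b' y| ≤
        ∑ z : Fin n → A, (hAux (E y - E z) b - hAux (E y - E z) b') := by
    intro b b' hbb y
    rw [boltzmann_eq_inv, boltzmann_eq_inv]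
    set D : ℝ := ∑ z : Fin n → A, Real.exp (b * (E y - E z)) with hD
    set D' : ℝ := ∑ z : Fin n → A, Real.exp (b' * (E y - E z)) with hD'
    have hDone : ∀ (c : ℝ), c = b ∨ c = b' →
        (1:ℝ) ≤ ∑ z : Fin n → A, Real.exp (c * (E y - E z)) := by
      intro c _
      have := Finset.single_le_sum
        (f := fun z : Fin n → A => Real.exp (c * (E y - E z)))
        (fun z _ => (Real.exp_pos _).le) (Finset.mem_univ y)
      simpa using this
    have hD1 : (1:ℝ) ≤ D := hDone b (Or.inl rfl)
    have hD1' : (1:ℝ) ≤ D' := hDone b' (Or.inr rfl)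
    have hDpos : (0:ℝ) < D := lt_of_lt_of_le one_pos hD1
    have hDpos' : (0:ℝ) < D' := lt_of_lt_of_le one_pos hD1'
    have hdiff : D⁻¹ - D'⁻¹ = (D' - D) / (D * D') := by
      field_simp
    rw [hdiff, abs_div, abs_of_pos (by positivity : (0:ℝ) < D * D')]
    have hsub : D' - D = ∑ z : Fin n → A, (Real.exp (b' * (E y - E z)) - Real.exp (b * (E y - E z))) := by
      rw [Finset.sum_sub_distrib]
    have habs : |D' - D| ≤ ∑ z : Fin n → A, |Real.exp (b' * (E y - E z)) - Real.exp (b * (E y - E z))| := by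
      rw [hsub]; exact Finset.abs_sum_le_sum_abs _ _
    calc |D' - D| / (D * D')
        ≤ (∑ z : Fin n → A, |Real.exp (b' * (E y - E z)) - Real.exp (b * (E y - E z))|) / (D * D') := by
          gcongr
      _ = ∑ z : Fin n → A, |Real.exp (b' * (E y - E z)) - Real.exp (b * (E y - E z))| / (D * D') := by
          rw [Finset.sum_div]
      _ ≤ ∑ z : Fin n → A, (hAux (E y - E z) b - hAux (E y - E z) b') := by
          apply Finset.sum_le_sum
          intro z _
          apply key_ineq hbb hD1 hD1'
          · intro hc
            have hyz : y ≠ z := fun h => hc (by rw [h]; ring)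
            have : Real.exp (b * (E y - E y)) + Real.exp (b * (E y - E z)) ≤ D := by
              have := Finset.sum_le_sum_of_subset_of_nonneg
                (Finset.subset_univ ({y, z} : Finset (Fin n → A)))
                (fun w _ _ => (Real.exp_pos (b * (E y - E w))).le)
              rwa [Finset.sum_pair hyz] at this
            simpa using this
          · intro hc
            have hyz : y ≠ z := fun h => hc (by rw [h]; ring)
            have : Real.exp (b' * (E y - E y)) + Real.exp (b' * (E y - E z)) ≤ D' := by
              have := Finset.sum_le_sum_of_subset_of_nonneg
                (Finset.subset_univ ({y, z} : Finset (Fin n → A)))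
                (fun w _ _ => (Real.exp_pos (b' * (E y - E w))).le)
              rwa [Finset.sum_pair hyz] at this
            simpa using this
  -- l1 bound
  have l1bound : ∀ t, l1 (boltzmann n E (β t)) (boltzmann n E (β (t + 1))) ≤
      H (β t) - H (β (t + 1)) := by
    intro t
    have hbb : β t ≤ β (t + 1) := hmono (Nat.le_succ t)
    unfold l1
    rw [hH]
    rw [← Finset.sum_sub_distrib]
    apply Finset.sum_le_sum
    intro y _
    rw [← Finset.sum_sub_distrib]
    exact coord _ _ hbb y
  have l1nonneg : ∀ t, 0 ≤ l1 (boltzmann n E (β t)) (boltzmann n E (β (t + 1))) := by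
    intro t
    exact Finset.sum_nonneg fun y _ => abs_nonneg _
  -- the majorant is summable by telescoping
  have hmaj : Summable fun t => H (β t) - H (β (t + 1)) := by
    apply summable_of_sum_range_le (c := H (β 0))
    · intro t
      exact sub_nonneg.mpr (Hanti (hmono (Nat.le_succ t)))
    · intro m
      rw [Finset.sum_range_sub' (fun t => H (β t)) m]
      have := Hnonneg (β m)
      linarith
  exact Summable.of_nonneg_of_le l1nonneg l1bound hmaj
end

section
/- Convergence of simulated annealing with the Gibbs sampler: suppose Δ > 0 and T₀ > nΔ, and set β_t = ln(⌊t/n⌋ + 1)/T₀ and P^{(t)} = P_{β_t}. Then for every initial probability distribution μ₀ on Aⁿ, lim_{r→∞} ‖μ₀ P^{(0,r)} − π*‖₁ = 0, where π* is the uniform distribution on H; in particular, the probability under μ₀ P^{(0,r)} of the event {y : E(y) = min_{z∈Aⁿ} E(z)} tends to 1 as r → ∞. -/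
open Filter

/-- The uniform distribution on the set of global minimizers of the energy. -/
noncomputable def uniformOnMinimizers {A : Type*} [Fintype A] [DecidableEq A]
    (n : ℕ) (E : (Fin n → A) → ℝ) : (Fin n → A) → ℝ :=
  fun y => if y ∈ minimizers n E then 1 / ((minimizers n E).card : ℝ) else 0

set_option linter.unusedSectionVars false
set_option linter.unusedVariables false

namespace SA
variable {A : Type*} [Fintype A] [DecidableEq A] [Nonempty A] {n : ℕ} {E : (Fin n → A) → ℝ}

/-- reindexing: sum over states agreeing with `w` off coordinate `i`. -/
lemma sum_ite_update (w : Fin n → A) (i : Fin n) (f : (Fin n → A) → ℝ) :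
    (∑ x : Fin n → A, if ∀ j, j ≠ i → x j = w j then f x else 0)
      = ∑ b : A, f (Function.update w i b) := by
  rw [Finset.sum_ite, Finset.sum_const_zero, add_zero]
  refine Finset.sum_nbij' (fun x => x i) (fun b => Function.update w i b) ?_ ?_ ?_ ?_ ?_
  · intro x _; exact Finset.mem_univ _
  · intro b _
    simp only [Finset.mem_filter, Finset.mem_univ, true_and]
    intro j hj
    simp [Function.update_of_ne hj]
  · intro x hx
    simp only [Finset.mem_filter, Finset.mem_univ, true_and] at hx
    funext j
    by_cases hj : j = i
    · subst hj; simp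
    · simp [Function.update_of_ne hj, hx j hj]
  · intro b _; simp
  · intro x hx
    simp only [Finset.mem_filter, Finset.mem_univ, true_and] at hx
    congr 1
    funext j
    by_cases hj : j = i
    · subst hj; simp
    · simp [Function.update_of_ne hj, hx j hj]

lemma sumExpA_pos (β : ℝ) (g : A → ℝ) : 0 < ∑ b : A, Real.exp (-β * g b) :=
  Finset.sum_pos (fun b _ => Real.exp_pos _) Finset.univ_nonempty

lemma gibbs_nonneg (β : ℝ) (u v : Fin n → A) : 0 ≤ gibbs n E β u v := by
  apply div_nonneg _ (Nat.cast_nonneg n)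
  apply Finset.sum_nonneg
  intro i _
  split
  · exact div_nonneg (Real.exp_pos _).le (sumExpA_pos β _).le
  · exact le_refl 0

lemma gibbs_row_sum (hn : 0 < n) (β : ℝ) (u : Fin n → A) :
    ∑ v, gibbs n E β u v = 1 := by
  unfold gibbs
  rw [← Finset.sum_div]
  rw [Finset.sum_comm]
  have : ∀ i : Fin n, (∑ v : Fin n → A,
      if ∀ j, j ≠ i → v j = u j then
        Real.exp (-β * E v) / ∑ b : A, Real.exp (-β * E (Function.update u i b))
      else 0) = 1 := by
    intro i
    rw [sum_ite_update u i (fun v => Real.exp (-β * E v) / ∑ b : A, Real.exp (-β * E (Function.update u i b)))]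
    rw [← Finset.sum_div]
    exact div_self (sumExpA_pos β _).ne'
  simp only [this]
  simp
  exact hn.ne'


/-- The Gibbs (Boltzmann) distribution at inverse temperature β. -/
noncomputable def gdist (E : (Fin n → A) → ℝ) (β : ℝ) : (Fin n → A) → ℝ :=
  fun y => Real.exp (-β * E y) / ∑ z, Real.exp (-β * E z)

lemma sumExp_pos [Nonempty (Fin n → A)] (β : ℝ) :
    0 < ∑ z : Fin n → A, Real.exp (-β * E z) :=
  Finset.sum_pos (fun b _ => Real.exp_pos _) Finset.univ_nonempty

lemma gdist_isDist (hn : 0 < n) (β : ℝ) :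
    (∀ y, 0 ≤ gdist E β y) ∧ ∑ y, gdist E β y = 1 := by
  constructor
  · intro y; exact div_nonneg (Real.exp_pos _).le (sumExp_pos β).le
  · unfold gdist; rw [← Finset.sum_div]; exact div_self (sumExp_pos β).ne'

lemma gdist_nonneg (β : ℝ) (y : Fin n → A) : 0 ≤ gdist E β y :=
  div_nonneg (Real.exp_pos _).le (sumExp_pos β).le

/-- Stationarity of the Gibbs distribution for the Gibbs sampler. -/
lemma gdist_stationary (hn : 0 < n) (β : ℝ) :
    Matrix.vecMul (gdist E β) (gibbs n E β) = gdist E β := by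
  funext v
  rw [Matrix.vecMul, dotProduct]
  unfold gibbs
  have key : ∀ i : Fin n, (∑ u : Fin n → A, gdist E β u *
      (if ∀ j, j ≠ i → v j = u j then
        Real.exp (-β * E v) / ∑ b : A, Real.exp (-β * E (Function.update u i b))
      else 0)) = gdist E β v := by
    intro i
    have swap : ∀ u : Fin n → A, gdist E β u *
        (if ∀ j, j ≠ i → v j = u j then
          Real.exp (-β * E v) / ∑ b : A, Real.exp (-β * E (Function.update u i b))
        else 0)
        = (if ∀ j, j ≠ i → u j = v j then gdist E β u *
            (Real.exp (-β * E v) / ∑ b : A, Real.exp (-β * E (Function.update u i b)))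
          else 0) := by
      intro u
      by_cases h : ∀ j, j ≠ i → v j = u j
      · rw [if_pos h, if_pos (fun j hj => (h j hj).symm)]
      · rw [if_neg h, if_neg (fun h' => h (fun j hj => (h' j hj).symm)), mul_zero]
    simp only [swap]
    rw [sum_ite_update v i]
    have hZ : ∀ b : A, (∑ c : A, Real.exp (-β * E (Function.update (Function.update v i b) i c)))
        = ∑ c : A, Real.exp (-β * E (Function.update v i c)) := by
      intro b
      apply Finset.sum_congr rfl
      intro c _
      rw [Function.update_idem]
    simp only [hZ]
    unfold gdist
    rw [← Finset.sum_mul, ← Finset.sum_div]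
    have hZi := (sumExpA_pos β (fun b => E (Function.update v i b))).ne'
    have hZ2 := (sumExp_pos (E := E) β).ne'
    field_simp
  simp only [← mul_div_assoc, Finset.mul_sum, ← Finset.sum_div]
  rw [Finset.sum_comm]
  simp only [key]
  rw [Finset.sum_const, Finset.card_univ, Fintype.card_fin, nsmul_eq_mul]
  rw [mul_comm, mul_div_assoc, div_self (Nat.cast_ne_zero.mpr hn.ne'), mul_one]


section Stoch
variable {S : Type*} [Fintype S] [DecidableEq S]

/-- row-stochastic matrix -/
def Stoch (M : Matrix S S ℝ) : Prop :=
  (∀ u v, 0 ≤ M u v) ∧ ∀ u, ∑ v, M u v = 1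

lemma Stoch.one : Stoch (1 : Matrix S S ℝ) := by
  constructor
  · intro u v
    by_cases h : u = v
    · subst h; simp
    · simp [Matrix.one_apply_ne h]
  · intro u; simp [Matrix.one_apply]

lemma Stoch.mul {M N : Matrix S S ℝ} (hM : Stoch M) (hN : Stoch N) : Stoch (M * N) := by
  constructor
  · intro u v
    rw [Matrix.mul_apply]
    exact Finset.sum_nonneg fun x _ => mul_nonneg (hM.1 u x) (hN.1 x v)
  · intro u
    simp only [Matrix.mul_apply]
    rw [Finset.sum_comm]
    have : ∀ x : S, ∑ v : S, M u x * N x v = M u x := by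
      intro x; rw [← Finset.mul_sum, hN.2 x, mul_one]
    simp only [this]
    exact hM.2 u

lemma vecMul_apply (μ : S → ℝ) (M : Matrix S S ℝ) (v : S) :
    Matrix.vecMul μ M v = ∑ u, μ u * M u v := rfl

lemma Stoch.isDist_vecMul {M : Matrix S S ℝ} (hM : Stoch M) {μ : S → ℝ} (hμ : IsDist μ) :
    IsDist (Matrix.vecMul μ M) := by
  constructor
  · intro v
    rw [vecMul_apply]
    exact Finset.sum_nonneg fun u _ => mul_nonneg (hμ.1 u) (hM.1 u v)
  · simp only [vecMul_apply]
    rw [Finset.sum_comm]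
    have : ∀ u : S, ∑ v : S, μ u * M u v = μ u := by
      intro u; rw [← Finset.mul_sum, hM.2 u, mul_one]
    simp only [this]
    exact hμ.2

lemma l1_nonneg (u v : S → ℝ) : 0 ≤ l1 u v :=
  Finset.sum_nonneg fun k _ => abs_nonneg _

lemma l1_triangle (u v w : S → ℝ) : l1 u w ≤ l1 u v + l1 v w := by
  rw [l1, l1, l1, ← Finset.sum_add_distrib]
  apply Finset.sum_le_sum
  intro k _
  have : u k - w k = (u k - v k) + (v k - w k) := by ring
  rw [this]
  exact abs_add_le _ _

lemma l1_dist_le_two {μ ν : S → ℝ} (hμ : IsDist μ) (hν : IsDist ν) : l1 μ ν ≤ 2 := by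
  have : ∀ k, |μ k - ν k| ≤ μ k + ν k := by
    intro k
    rw [abs_sub_le_iff]
    constructor <;> nlinarith [hμ.1 k, hν.1 k]
  calc l1 μ ν ≤ ∑ k, (μ k + ν k) := Finset.sum_le_sum fun k _ => this k
    _ = 2 := by rw [Finset.sum_add_distrib, hμ.2, hν.2]; norm_num

/-- The key contraction estimate: if all entries of a stochastic matrix are at
least `δ` and `μ`, `ν` have the same total mass, the `l1` distance contracts. -/
lemma l1_contract {M : Matrix S S ℝ} (hM : Stoch M) {δ : ℝ}
    (hδ : ∀ u v, δ ≤ M u v) {μ ν : S → ℝ} (hsum : ∑ k, μ k = ∑ k, ν k) :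
    l1 (Matrix.vecMul μ M) (Matrix.vecMul ν M) ≤ (1 - Fintype.card S * δ) * l1 μ ν := by
  have hzero : ∑ k, (μ k - ν k) = 0 := by
    rw [Finset.sum_sub_distrib, hsum, sub_self]
  have step1 : ∀ v, Matrix.vecMul μ M v - Matrix.vecMul ν M v
      = ∑ u, (μ u - ν u) * (M u v - δ) := by
    intro v
    simp only [vecMul_apply, sub_mul, mul_sub]
    rw [Finset.sum_sub_distrib, Finset.sum_sub_distrib, Finset.sum_sub_distrib,
        ← Finset.sum_mul, ← Finset.sum_mul, hsum]
    ring
  rw [l1]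
  simp only [step1]
  calc ∑ v, |∑ u, (μ u - ν u) * (M u v - δ)|
      ≤ ∑ v, ∑ u, |μ u - ν u| * (M u v - δ) := by
        apply Finset.sum_le_sum; intro v _
        calc |∑ u, (μ u - ν u) * (M u v - δ)| ≤ ∑ u, |(μ u - ν u) * (M u v - δ)| :=
              Finset.abs_sum_le_sum_abs _ _
          _ = ∑ u, |μ u - ν u| * (M u v - δ) := by
              apply Finset.sum_congr rfl; intro u _
              rw [abs_mul, abs_of_nonneg (sub_nonneg.mpr (hδ u v))]
    _ = ∑ u, |μ u - ν u| * (1 - Fintype.card S * δ) := by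
        rw [Finset.sum_comm]
        apply Finset.sum_congr rfl; intro u _
        rw [← Finset.mul_sum, Finset.sum_sub_distrib, hM.2 u, Finset.sum_const,
            Finset.card_univ, nsmul_eq_mul]
    _ = (1 - Fintype.card S * δ) * l1 μ ν := by rw [← Finset.sum_mul, mul_comm]; rfl

end Stoch

lemma l1_vecMul_le {S : Type*} [Fintype S] [DecidableEq S] {M : Matrix S S ℝ} (hM : Stoch M)
    {μ ν : S → ℝ} (hsum : ∑ k, μ k = ∑ k, ν k) :
    l1 (Matrix.vecMul μ M) (Matrix.vecMul ν M) ≤ l1 μ ν := by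
  have := l1_contract hM (δ := 0) (fun u v => hM.1 u v) hsum
  simpa using this

section PprodSec
variable {S : Type*} [Fintype S] [DecidableEq S] (P : ℕ → Matrix S S ℝ)

lemma Pprod_same (a b : ℕ) (h : b ≤ a) : Pprod P a b = 1 := by
  unfold Pprod
  rw [Nat.sub_eq_zero_of_le h]
  simp

lemma Pprod_succ (a b : ℕ) (h : a ≤ b) : Pprod P a (b + 1) = Pprod P a b * P b := by
  unfold Pprod
  rw [Nat.succ_sub h, List.range_succ, List.map_append, List.prod_append]
  simp [Nat.add_sub_cancel' h]

lemma Pprod_mul (a b c : ℕ) (hab : a ≤ b) (hbc : b ≤ c) :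
    Pprod P a b * Pprod P b c = Pprod P a c := by
  induction c, hbc using Nat.le_induction with
  | base => rw [Pprod_same P b b le_rfl, mul_one]
  | succ c hc ih => rw [Pprod_succ P b c hc, Pprod_succ P a c (hab.trans hc), ← mul_assoc, ih]

lemma Pprod_stoch (hP : ∀ t, Stoch (P t)) (a b : ℕ) : Stoch (Pprod P a b) := by
  induction b with
  | zero => rw [Pprod_same P a 0 (Nat.zero_le a)]; exact Stoch.one
  | succ b ih =>
    rcases le_or_gt a b with h | h
    · rw [Pprod_succ P a b h]; exact ih.mul (hP b)
    · rw [Pprod_same P a (b + 1) h]; exact Stoch.one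

lemma Pprod_eq_pow (a m : ℕ) (M : Matrix S S ℝ) (h : ∀ t, t < m → P (a + t) = M) :
    Pprod P a (a + m) = M ^ m := by
  induction m with
  | zero => simp [Pprod_same]
  | succ m ih =>
    rw [show a + (m + 1) = (a + m) + 1 from rfl,
        Pprod_succ P a (a + m) (Nat.le_add_right a m),
        ih (fun t ht => h t (ht.trans (Nat.lt_succ_self m))),
        h m (Nat.lt_succ_self m), pow_succ]

lemma Stoch.pow {M : Matrix S S ℝ} (hM : Stoch M) (m : ℕ) : Stoch (M ^ m) := by
  induction m with
  | zero => rw [pow_zero]; exact Stoch.one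
  | succ m ih => rw [pow_succ]; exact ih.mul hM

end PprodSec

/-- entries of the `n`-th power of a matrix with single-site moves bounded below. -/
lemma pow_entry_lb {M : Matrix (Fin n → A) (Fin n → A) ℝ} (hM : Stoch M)
    {θ : ℝ} (hθ : 0 ≤ θ) (h : ∀ u (i : Fin n) (a : A), θ ≤ M u (Function.update u i a)) :
    ∀ m, m ≤ n → ∀ u v : Fin n → A, (∀ j : Fin n, m ≤ (j : ℕ) → v j = u j) →
      θ ^ m ≤ (M ^ m) u v := by
  intro m
  induction m with
  | zero =>
    intro _ u v hagree
    have : v = u := funext fun j => hagree j (Nat.zero_le _)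
    subst this
    have h0 : (M ^ (0:ℕ)) = (1 : Matrix _ _ ℝ) := pow_zero M
    rw [h0, Matrix.one_apply_eq, pow_zero]
  | succ m ih =>
    intro hmn u v hagree
    have hmn' : m < n := Nat.lt_of_lt_of_le (Nat.lt_succ_self m) hmn
    set i : Fin n := ⟨m, hmn'⟩ with hi
    set w : Fin n → A := Function.update v i (u i) with hw
    have hw_u : ∀ j : Fin n, m ≤ (j : ℕ) → w j = u j := by
      intro j hj
      by_cases hji : j = i
      · subst hji; simp [hw]
      · have : (j : ℕ) ≠ m := fun hc => hji (Fin.ext hc)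
        rw [hw, Function.update_of_ne hji]
        exact hagree j (Nat.lt_of_le_of_ne hj (Ne.symm this))
    have hv_w : v = Function.update w i (v i) := by
      funext j
      by_cases hji : j = i
      · subst hji; simp
      · rw [Function.update_of_ne hji, hw, Function.update_of_ne hji]
    have h2 : θ ≤ M w v := by
      rw [hv_w]; exact h w i (v i)
    have h1 : θ ^ m ≤ (M ^ m) u w := ih (Nat.le_of_lt hmn') u w hw_u
    calc θ ^ (m + 1) = θ ^ m * θ := by rw [pow_succ]
      _ ≤ (M ^ m) u w * M w v := mul_le_mul h1 h2 hθ ((hM.pow m).1 u w)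
      _ ≤ ∑ x, (M ^ m) u x * M x v :=
          Finset.single_le_sum
            (fun x _ => mul_nonneg ((hM.pow m).1 u x) (hM.1 x v)) (Finset.mem_univ w)
      _ = (M ^ (m + 1)) u v := by rw [pow_succ, Matrix.mul_apply]

/-- lower bound for single-site Gibbs moves. -/
lemma gibbs_entry_lb (hn : 0 < n) {β : ℝ} (hβ : 0 ≤ β) {Δ : ℝ}
    (hspan : ∀ u (i : Fin n) (a b : A),
      |E (Function.update u i a) - E (Function.update u i b)| ≤ Δ)
    (u : Fin n → A) (i : Fin n) (a : A) :
    Real.exp (-β * Δ) / (Fintype.card A * n) ≤ gibbs n E β u (Function.update u i a) := by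
  set v := Function.update u i a with hv
  have hcond : ∀ j, j ≠ i → v j = u j := fun j hj => Function.update_of_ne hj _ _
  have hZ : (∑ b : A, Real.exp (-β * E (Function.update u i b)))
      ≤ Fintype.card A * Real.exp (-β * (E v - Δ)) := by
    calc (∑ b : A, Real.exp (-β * E (Function.update u i b)))
        ≤ ∑ _b : A, Real.exp (-β * (E v - Δ)) := by
          apply Finset.sum_le_sum
          intro b _
          apply Real.exp_le_exp.mpr
          have hd : E v - E (Function.update u i b) ≤ Δ :=
            (abs_le.mp (hspan u i a b)).2
          nlinarith
      _ = Fintype.card A * Real.exp (-β * (E v - Δ)) := by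
          rw [Finset.sum_const, Finset.card_univ, nsmul_eq_mul]
  have hcardA : (0 : ℝ) < Fintype.card A := by
    have := Fintype.card_pos (α := A); positivity
  have hterm : Real.exp (-β * Δ) / Fintype.card A ≤
      Real.exp (-β * E v) / ∑ b : A, Real.exp (-β * E (Function.update u i b)) := by
    rw [div_le_div_iff₀ (by positivity) (sumExpA_pos β _)]
    calc Real.exp (-β * Δ) * ∑ b : A, Real.exp (-β * E (Function.update u i b))
        ≤ Real.exp (-β * Δ) * (Fintype.card A * Real.exp (-β * (E v - Δ))) := by
          apply mul_le_mul_of_nonneg_left hZ (Real.exp_pos _).le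
      _ = Real.exp (-β * Δ + -β * (E v - Δ)) * Fintype.card A := by
          rw [Real.exp_add]; ring
      _ = Real.exp (-β * E v) * Fintype.card A := by ring_nf
  have hnonneg : ∀ i' : Fin n, i' ∈ Finset.univ → (0:ℝ) ≤
      (if ∀ j, j ≠ i' → v j = u j then
        Real.exp (-β * E v) / ∑ b : A, Real.exp (-β * E (Function.update u i' b))
      else 0) := by
    intro i' _
    split
    · positivity
    · exact le_rfl
  have hsum : Real.exp (-β * E v) / (∑ b : A, Real.exp (-β * E (Function.update u i b)))
      ≤ ∑ i' : Fin n, (if ∀ j, j ≠ i' → v j = u j then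
          Real.exp (-β * E v) / ∑ b : A, Real.exp (-β * E (Function.update u i' b))
        else 0) := by
    have h := Finset.single_le_sum hnonneg (Finset.mem_univ i)
    rwa [if_pos hcond] at h
  have hnR : (0:ℝ) < (n : ℝ) := Nat.cast_pos.mpr hn
  show _ ≤ _
  unfold gibbs
  calc Real.exp (-β * Δ) / (Fintype.card A * n)
      = (Real.exp (-β * Δ) / Fintype.card A) / n := by rw [div_div]
    _ ≤ _ := by gcongr; exact hterm.trans hsum


/-- Lipschitz bound for `exp` on the negative half-line. -/
lemma exp_neg_lip {a b : ℝ} (ha : 0 ≤ a) (hb : 0 ≤ b) :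
    |Real.exp (-a) - Real.exp (-b)| ≤ |a - b| := by
  wlog hab : a ≤ b generalizing a b
  · rw [abs_sub_comm, abs_sub_comm a b]
    exact this hb ha (le_of_not_ge hab)
  have h1 : Real.exp (-b) ≤ Real.exp (-a) := Real.exp_le_exp.mpr (by linarith)
  rw [abs_of_nonneg (by linarith), abs_of_nonpos (by linarith)]
  have h2 : Real.exp (-a) ≤ 1 := Real.exp_le_one_iff.mpr (by linarith)
  have h3 : -(b - a) + 1 ≤ Real.exp (-(b - a)) := Real.add_one_le_exp _
  have h4 : Real.exp (-a) - Real.exp (-b) = Real.exp (-a) * (1 - Real.exp (-(b - a))) := by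
    rw [mul_sub, mul_one, ← Real.exp_add]
    ring_nf
  rw [h4]
  calc Real.exp (-a) * (1 - Real.exp (-(b - a))) ≤ 1 * (1 - Real.exp (-(b - a))) := by
        apply mul_le_mul_of_nonneg_right h2
        nlinarith [Real.exp_le_one_iff.mpr (by linarith : -(b-a) ≤ 0)]
    _ ≤ -(a - b) := by nlinarith

section Analysis
variable (hn : 0 < n) {y₀ : Fin n → A} (hy₀ : ∀ z, E y₀ ≤ E z)
include hy₀

/-- normalized partition function -/
noncomputable def Zn (E : (Fin n → A) → ℝ) (y₀ : Fin n → A) (β : ℝ) : ℝ :=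
  ∑ z, Real.exp (-β * (E z - E y₀))

omit hy₀ in
lemma gdist_eq_norm (β : ℝ) (y : Fin n → A) :
    gdist E β y = Real.exp (-β * (E y - E y₀)) / Zn E y₀ β := by
  have hpos : (0:ℝ) < Zn E y₀ β :=
    Finset.sum_pos (fun z _ => Real.exp_pos _) Finset.univ_nonempty
  unfold gdist
  rw [div_eq_div_iff (sumExp_pos β).ne' hpos.ne']
  unfold Zn
  rw [Finset.mul_sum, Finset.mul_sum]
  apply Finset.sum_congr rfl
  intro z _
  rw [← Real.exp_add, ← Real.exp_add]
  ring_nf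

omit hy₀ in
lemma mem_minimizers_iff (y : Fin n → A) :
    y ∈ minimizers n E ↔ ∀ z, E y ≤ E z := by
  unfold minimizers
  simp

lemma mem_minimizers_iff' (y : Fin n → A) :
    y ∈ minimizers n E ↔ E y = E y₀ := by
  rw [mem_minimizers_iff]
  constructor
  · intro h; exact le_antisymm (h y₀) (hy₀ y)
  · intro h z; rw [h]; exact hy₀ z

lemma minimizers_nonempty : (minimizers n E).Nonempty :=
  ⟨y₀, (mem_minimizers_iff y₀).mpr hy₀⟩

lemma card_min_pos : (0:ℝ) < (minimizers n E).card := by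
  have := Finset.card_pos.mpr (minimizers_nonempty hy₀)
  exact_mod_cast this

lemma Zn_ge_card (β : ℝ) : ((minimizers n E).card : ℝ) ≤ Zn E y₀ β := by
  unfold Zn
  calc ((minimizers n E).card : ℝ) = ∑ _z ∈ minimizers n E, (1:ℝ) := by
        rw [Finset.sum_const, nsmul_eq_mul, mul_one]
    _ = ∑ z ∈ minimizers n E, Real.exp (-β * (E z - E y₀)) := by
        apply Finset.sum_congr rfl
        intro z hz
        rw [(mem_minimizers_iff' hy₀ z).mp hz]
        simp
    _ ≤ ∑ z, Real.exp (-β * (E z - E y₀)) := by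
        apply Finset.sum_le_sum_of_subset_of_nonneg (Finset.subset_univ _)
        intro z _ _
        exact (Real.exp_pos _).le

lemma Zn_ge_one (β : ℝ) : (1:ℝ) ≤ Zn E y₀ β := by
  calc (1:ℝ) ≤ ((minimizers n E).card : ℝ) := by
        exact_mod_cast Finset.card_pos.mpr (minimizers_nonempty hy₀)
    _ ≤ Zn E y₀ β := Zn_ge_card hy₀ β

variable {g : ℝ} (hgle : ∀ z, z ∉ minimizers n E → g ≤ E z - E y₀)
include hgle

lemma Zn_le_card (hβ : 0 ≤ β) :
    Zn E y₀ β ≤ ((minimizers n E).card : ℝ)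
      + (Fintype.card (Fin n → A)) * Real.exp (-β * g) := by
  unfold Zn
  rw [← Finset.sum_filter_add_sum_filter_not Finset.univ (fun z => z ∈ minimizers n E)]
  apply add_le_add
  · calc ∑ z ∈ Finset.univ.filter (fun z => z ∈ minimizers n E), Real.exp (-β * (E z - E y₀))
        ≤ ∑ _z ∈ Finset.univ.filter (fun z => z ∈ minimizers n E), (1:ℝ) := by
          apply Finset.sum_le_sum
          intro z hz
          rw [(mem_minimizers_iff' hy₀ z).mp (Finset.mem_filter.mp hz).2]
          simp
      _ ≤ ((minimizers n E).card : ℝ) := by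
          rw [Finset.sum_const, nsmul_eq_mul, mul_one]
          apply Nat.cast_le.mpr
          apply Finset.card_le_card
          intro z hz
          exact (Finset.mem_filter.mp hz).2
  · calc ∑ z ∈ Finset.univ.filter (fun z => z ∉ minimizers n E), Real.exp (-β * (E z - E y₀))
        ≤ ∑ _z ∈ Finset.univ.filter (fun z => z ∉ minimizers n E), Real.exp (-β * g) := by
          apply Finset.sum_le_sum
          intro z hz
          apply Real.exp_le_exp.mpr
          have := hgle z (Finset.mem_filter.mp hz).2
          nlinarith
      _ ≤ (Fintype.card (Fin n → A)) * Real.exp (-β * g) := by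
          rw [Finset.sum_const, nsmul_eq_mul]
          apply mul_le_mul_of_nonneg_right _ (Real.exp_pos _).le
          apply Nat.cast_le.mpr
          calc (Finset.univ.filter (fun z => z ∉ minimizers n E)).card
              ≤ Finset.univ.card := Finset.card_le_card (Finset.filter_subset _ _)
            _ = Fintype.card (Fin n → A) := Finset.card_univ


lemma uniform_isDist : IsDist (uniformOnMinimizers n E) := by
  constructor
  · intro y
    unfold uniformOnMinimizers
    split
    · positivity
    · exact le_rfl
  · unfold uniformOnMinimizers
    rw [Finset.sum_ite_mem, Finset.univ_inter, Finset.sum_const, nsmul_eq_mul]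
    rw [mul_one_div, div_self (card_min_pos hy₀).ne']

lemma gdist_close_uniform {β : ℝ} (hβ : 0 ≤ β) :
    l1 (gdist E β) (uniformOnMinimizers n E)
      ≤ (Fintype.card (Fin n → A))^2 * Real.exp (-β * g) := by
  have hS1 : (1:ℝ) ≤ Fintype.card (Fin n → A) := by
    exact_mod_cast Fintype.card_pos
  have key : ∀ y, |gdist E β y - uniformOnMinimizers n E y|
      ≤ (Fintype.card (Fin n → A)) * Real.exp (-β * g) := by
    intro y
    have hZ1 : (1:ℝ) ≤ Zn E y₀ β := Zn_ge_one hy₀ β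
    have hZc : ((minimizers n E).card : ℝ) ≤ Zn E y₀ β := Zn_ge_card hy₀ β
    have hc1 : (1:ℝ) ≤ ((minimizers n E).card : ℝ) := by
      exact_mod_cast Finset.card_pos.mpr (minimizers_nonempty hy₀)
    have hup := Zn_le_card hy₀ hgle hβ
    by_cases hy : y ∈ minimizers n E
    · have h1 : gdist E β y = 1 / Zn E y₀ β := by
        rw [gdist_eq_norm (y₀ := y₀), (mem_minimizers_iff' hy₀ y).mp hy]
        simp
      have h2 : uniformOnMinimizers n E y = 1 / ((minimizers n E).card : ℝ) := if_pos hy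
      rw [h1, h2]
      have hneg : 1 / Zn E y₀ β - 1 / ((minimizers n E).card : ℝ) ≤ 0 := by
        have := one_div_le_one_div_of_le (by linarith : (0:ℝ) < ((minimizers n E).card : ℝ)) hZc
        linarith
      rw [abs_of_nonpos hneg]
      have e1 : 1 / ((minimizers n E).card : ℝ) - 1 / Zn E y₀ β
          = (Zn E y₀ β - ((minimizers n E).card : ℝ)) / (((minimizers n E).card : ℝ) * Zn E y₀ β) := by
        field_simp
      have e2 : (Zn E y₀ β - ((minimizers n E).card : ℝ)) / (((minimizers n E).card : ℝ) * Zn E y₀ β)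
          ≤ Zn E y₀ β - ((minimizers n E).card : ℝ) :=
        div_le_self (by linarith) (by nlinarith)
      nlinarith
    · have h2 : uniformOnMinimizers n E y = 0 := if_neg hy
      rw [h2, sub_zero, abs_of_nonneg (gdist_nonneg β y)]
      rw [gdist_eq_norm (y₀ := y₀)]
      calc Real.exp (-β * (E y - E y₀)) / Zn E y₀ β ≤ Real.exp (-β * (E y - E y₀)) :=
            div_le_self (Real.exp_pos _).le hZ1
        _ ≤ Real.exp (-β * g) := by
            apply Real.exp_le_exp.mpr
            have := hgle y hy
            nlinarith
        _ ≤ (Fintype.card (Fin n → A)) * Real.exp (-β * g) := by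
            nlinarith [Real.exp_pos (-β * g)]
  calc l1 (gdist E β) (uniformOnMinimizers n E)
      ≤ ∑ _y : Fin n → A, (Fintype.card (Fin n → A)) * Real.exp (-β * g) :=
        Finset.sum_le_sum (fun y _ => key y)
    _ = (Fintype.card (Fin n → A))^2 * Real.exp (-β * g) := by
        rw [Finset.sum_const, Finset.card_univ, nsmul_eq_mul]
        ring

lemma gdist_lip {β β' D : ℝ} (hβ : 0 ≤ β) (hββ' : β ≤ β')
    (hD : ∀ z, E z - E y₀ ≤ D) :
    l1 (gdist E β) (gdist E β')
      ≤ (Fintype.card (Fin n → A))^2 * D * Real.exp (-β * g) * (β' - β) := by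
  set h := β' - β with hh
  have hh0 : 0 ≤ h := by linarith
  have hd0 : ∀ z, 0 ≤ E z - E y₀ := fun z => by linarith [hy₀ z]
  have hD0 : 0 ≤ D := le_trans (hd0 y₀) (hD y₀)
  have key : ∀ y, |gdist E β y - gdist E β' y|
      ≤ (Fintype.card (Fin n → A)) * (D * Real.exp (-β * g) * h) := by
    intro y
    have hZ1 : (1:ℝ) ≤ Zn E y₀ β := Zn_ge_one hy₀ β
    have hZ1' : (1:ℝ) ≤ Zn E y₀ β' := Zn_ge_one hy₀ β'
    rw [gdist_eq_norm (y₀ := y₀) β y, gdist_eq_norm (y₀ := y₀) β' y]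
    have e0 : Real.exp (-β * (E y - E y₀)) / Zn E y₀ β
        - Real.exp (-β' * (E y - E y₀)) / Zn E y₀ β'
        = (Real.exp (-β * (E y - E y₀)) * Zn E y₀ β'
            - Real.exp (-β' * (E y - E y₀)) * Zn E y₀ β)
          / (Zn E y₀ β * Zn E y₀ β') := by
      field_simp
    rw [e0, abs_div]
    have hden : (1:ℝ) ≤ |Zn E y₀ β * Zn E y₀ β'| := by
      rw [abs_of_nonneg (by nlinarith)]
      nlinarith
    have tabs : ∀ a b : ℝ, 0 ≤ a → a ≤ D → 0 ≤ b → b ≤ D →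
        ((a = 0 ∧ b = 0) ∨ g ≤ a ∨ g ≤ b) →
        |Real.exp (-β * a) * Real.exp (-β' * b) - Real.exp (-β' * a) * Real.exp (-β * b)|
          ≤ D * Real.exp (-β * g) * h := by
      intro a b ha0 haD hb0 hbD hcase
      have efac : Real.exp (-β * a) * Real.exp (-β' * b)
          - Real.exp (-β' * a) * Real.exp (-β * b)
          = Real.exp (-β * a) * Real.exp (-β * b)
            * (Real.exp (-(h * b)) - Real.exp (-(h * a))) := by
        rw [hh, mul_sub]
        simp only [← Real.exp_add]
        congr 1 <;> rw [Real.exp_eq_exp] <;> ring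
      rw [efac, abs_mul, abs_mul, abs_of_nonneg (Real.exp_pos (-β * a)).le,
          abs_of_nonneg (Real.exp_pos (-β * b)).le]
      have hlip : |Real.exp (-(h * b)) - Real.exp (-(h * a))| ≤ h * |b - a| := by
        have := exp_neg_lip (mul_nonneg hh0 hb0) (mul_nonneg hh0 ha0)
        calc |Real.exp (-(h * b)) - Real.exp (-(h * a))| ≤ |h * b - h * a| := this
          _ = h * |b - a| := by rw [← mul_sub, abs_mul, abs_of_nonneg hh0]
      have hba : |b - a| ≤ D := by
        rw [abs_le]; constructor <;> [linarith; linarith]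
      have hone : ∀ c : ℝ, 0 ≤ c → Real.exp (-β * c) ≤ 1 := fun c hc =>
        Real.exp_le_one_iff.mpr (by nlinarith)
      rcases hcase with ⟨ha, hb⟩ | hga | hgb
      · rw [ha, hb, sub_self, abs_zero, mul_zero]
        exact mul_nonneg (mul_nonneg hD0 (Real.exp_pos _).le) hh0
      · have hfac : Real.exp (-β * a) * Real.exp (-β * b) ≤ Real.exp (-β * g) := by
          calc Real.exp (-β * a) * Real.exp (-β * b)
              ≤ Real.exp (-β * a) * 1 :=
                mul_le_mul_of_nonneg_left (hone b hb0) (Real.exp_pos _).le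
            _ = Real.exp (-β * a) := mul_one _
            _ ≤ Real.exp (-β * g) := Real.exp_le_exp.mpr (by nlinarith)
        calc Real.exp (-β * a) * Real.exp (-β * b)
              * |Real.exp (-(h * b)) - Real.exp (-(h * a))|
            ≤ Real.exp (-β * g) * (h * |b - a|) :=
              mul_le_mul hfac hlip (abs_nonneg _) (Real.exp_pos _).le
          _ ≤ Real.exp (-β * g) * (h * D) := by
              apply mul_le_mul_of_nonneg_left _ (Real.exp_pos _).le
              exact mul_le_mul_of_nonneg_left hba hh0
          _ = D * Real.exp (-β * g) * h := by ring
      · have hfac : Real.exp (-β * a) * Real.exp (-β * b) ≤ Real.exp (-β * g) := by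
          calc Real.exp (-β * a) * Real.exp (-β * b)
              ≤ 1 * Real.exp (-β * b) :=
                mul_le_mul_of_nonneg_right (hone a ha0) (Real.exp_pos _).le
            _ = Real.exp (-β * b) := one_mul _
            _ ≤ Real.exp (-β * g) := Real.exp_le_exp.mpr (by nlinarith)
        calc Real.exp (-β * a) * Real.exp (-β * b)
              * |Real.exp (-(h * b)) - Real.exp (-(h * a))|
            ≤ Real.exp (-β * g) * (h * |b - a|) :=
              mul_le_mul hfac hlip (abs_nonneg _) (Real.exp_pos _).le
          _ ≤ Real.exp (-β * g) * (h * D) := by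
              apply mul_le_mul_of_nonneg_left _ (Real.exp_pos _).le
              exact mul_le_mul_of_nonneg_left hba hh0
          _ = D * Real.exp (-β * g) * h := by ring
    have hnum : |Real.exp (-β * (E y - E y₀)) * Zn E y₀ β'
        - Real.exp (-β' * (E y - E y₀)) * Zn E y₀ β|
        ≤ (Fintype.card (Fin n → A)) * (D * Real.exp (-β * g) * h) := by
      unfold Zn
      rw [Finset.mul_sum, Finset.mul_sum, ← Finset.sum_sub_distrib]
      have tbound : ∀ z : Fin n → A,
          |Real.exp (-β * (E y - E y₀)) * Real.exp (-β' * (E z - E y₀))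
            - Real.exp (-β' * (E y - E y₀)) * Real.exp (-β * (E z - E y₀))|
          ≤ D * Real.exp (-β * g) * h := by
        intro z
        apply tabs _ _ (hd0 y) (hD y) (hd0 z) (hD z)
        by_cases hy1 : y ∈ minimizers n E
        · by_cases hz1 : z ∈ minimizers n E
          · left
            constructor
            · rw [(mem_minimizers_iff' hy₀ y).mp hy1]; ring
            · rw [(mem_minimizers_iff' hy₀ z).mp hz1]; ring
          · right; right; exact hgle z hz1
        · right; left; exact hgle y hy1
      calc |∑ z : Fin n → A,
            (Real.exp (-β * (E y - E y₀)) * Real.exp (-β' * (E z - E y₀))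
              - Real.exp (-β' * (E y - E y₀)) * Real.exp (-β * (E z - E y₀)))|
          ≤ ∑ z : Fin n → A,
            |Real.exp (-β * (E y - E y₀)) * Real.exp (-β' * (E z - E y₀))
              - Real.exp (-β' * (E y - E y₀)) * Real.exp (-β * (E z - E y₀))| :=
            Finset.abs_sum_le_sum_abs _ _
        _ ≤ ∑ _z : Fin n → A, D * Real.exp (-β * g) * h :=
            Finset.sum_le_sum (fun z _ => tbound z)
        _ = (Fintype.card (Fin n → A)) * (D * Real.exp (-β * g) * h) := by
            rw [Finset.sum_const, Finset.card_univ, nsmul_eq_mul]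
    exact le_trans (div_le_self (abs_nonneg _) hden) hnum
  calc l1 (gdist E β) (gdist E β')
      ≤ ∑ _y : Fin n → A, (Fintype.card (Fin n → A)) * (D * Real.exp (-β * g) * h) :=
        Finset.sum_le_sum (fun y _ => key y)
    _ = (Fintype.card (Fin n → A))^2 * D * Real.exp (-β * g) * h := by
        rw [Finset.sum_const, Finset.card_univ, nsmul_eq_mul]
        ring

end Analysis

section Fixed
variable {S : Type*} [Fintype S] [DecidableEq S]

lemma vecMul_pow_fixed {M : Matrix S S ℝ} {μ : S → ℝ} (h : Matrix.vecMul μ M = μ) (m : ℕ) :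
    Matrix.vecMul μ (M ^ m) = μ := by
  induction m with
  | zero => rw [pow_zero, Matrix.vecMul_one]
  | succ m ih => rw [pow_succ, ← Matrix.vecMul_vecMul, ih, h]

lemma vecMul_Pprod_fixed (P : ℕ → Matrix S S ℝ) {μ : S → ℝ} (a b : ℕ)
    (h : ∀ t, a ≤ t → t < b → Matrix.vecMul μ (P t) = μ) :
    Matrix.vecMul μ (Pprod P a b) = μ := by
  induction b with
  | zero => rw [Pprod_same P a 0 (Nat.zero_le a), Matrix.vecMul_one]
  | succ b ih =>
    rcases le_or_gt a b with hab | hab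
    · rw [Pprod_succ P a b hab, ← Matrix.vecMul_vecMul,
        ih (fun t ht1 ht2 => h t ht1 (ht2.trans (Nat.lt_succ_self b))),
        h b hab (Nat.lt_succ_self b)]
    · rw [Pprod_same P a (b + 1) hab, Matrix.vecMul_one]

end Fixed

lemma energySpan_bound (u : Fin n → A) (i : Fin n) (a b : A) :
    |E (Function.update u i a) - E (Function.update u i b)| ≤ energySpan n E := by
  exact le_ciSup (f := fun q : (Fin n → A) × Fin n × A × A =>
      |E (Function.update q.1 q.2.1 q.2.2.1) - E (Function.update q.1 q.2.1 q.2.2.2)|)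
    (Set.Finite.bddAbove (Set.finite_range _)) ⟨u, i, a, b⟩

lemma exists_nonminimizer (hn : 0 < n) (hΔ : 0 < energySpan n E) :
    ∃ z, z ∉ minimizers n E := by
  by_contra hc
  push_neg at hc
  have hconst : ∀ y z : Fin n → A, E y = E z := by
    intro y z
    exact le_antisymm ((mem_minimizers_iff y).mp (hc y) z)
      ((mem_minimizers_iff z).mp (hc z) y)
  have : Nonempty ((Fin n → A) × Fin n × A × A) := by
    have : Nonempty (Fin n) := ⟨⟨0, hn⟩⟩
    infer_instance
  have hzero : energySpan n E ≤ 0 := by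
    apply ciSup_le
    intro q
    rw [hconst (Function.update q.1 q.2.1 q.2.2.1) (Function.update q.1 q.2.1 q.2.2.2)]
    simp
  linarith

lemma harmonic_shift_tendsto :
    Tendsto (fun k => ∑ j ∈ Finset.range k, (1:ℝ) / (j + 1)) atTop atTop := by
  rw [← not_summable_iff_tendsto_nat_atTop_of_nonneg (fun j => by positivity)]
  intro hs
  have h2 : Summable (fun j : ℕ => (1:ℝ) / (j : ℝ)) := by
    rw [← summable_nat_add_iff 1]
    convert hs using 2 with j
    push_cast
    · rfl
    · push_cast
      ring
  exact Real.not_summable_one_div_natCast h2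

end SA

set_option maxHeartbeats 2000000 in
/-- Convergence of simulated annealing with the Gibbs sampler: with the cooling
schedule `β_t = ln(⌊t/n⌋ + 1)/T₀`, `T₀ > nΔ`, the distribution after `r` steps
converges in ℓ¹ to the uniform distribution on the set of energy minimizers;
in particular the probability of the set of minimizers tends to `1`. -/
theorem gibbs_annealing_convergence {A : Type*} [Fintype A] [DecidableEq A] [Nonempty A]
    (n : ℕ) (hn : 0 < n) (E : (Fin n → A) → ℝ) (hΔ : 0 < energySpan n E)
    (T₀ : ℝ) (hT₀ : (n : ℝ) * energySpan n E < T₀)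
    (μ₀ : (Fin n → A) → ℝ) (hμ₀ : IsDist μ₀) :
    Tendsto (fun r =>
        l1 (Matrix.vecMul μ₀
              (Pprod (fun t => gibbs n E (Real.log ((t / n + 1 : ℕ) : ℝ) / T₀)) 0 r))
           (uniformOnMinimizers n E))
      atTop (nhds 0) ∧
    Tendsto (fun r => ∑ y ∈ minimizers n E,
        Matrix.vecMul μ₀
          (Pprod (fun t => gibbs n E (Real.log ((t / n + 1 : ℕ) : ℝ) / T₀)) 0 r) y)
      atTop (nhds 1) := by
  classical
  set P : ℕ → Matrix (Fin n → A) (Fin n → A) ℝ :=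
    fun t => gibbs n E (Real.log ((t / n + 1 : ℕ) : ℝ) / T₀) with hPdef
  -- minimum of the energy
  obtain ⟨y₀, -, hy₀'⟩ := Finset.exists_min_image Finset.univ E Finset.univ_nonempty
  have hy₀ : ∀ z, E y₀ ≤ E z := fun z => hy₀' z (Finset.mem_univ z)
  -- the spectral gap g
  obtain ⟨z₀, hz₀⟩ := SA.exists_nonminimizer hn hΔ
  have hHcne : (Finset.univ.filter (fun z => z ∉ minimizers n E)).Nonempty :=
    ⟨z₀, by simp [hz₀]⟩
  obtain ⟨zg, hzgmem, hzgmin⟩ :=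
    Finset.exists_min_image _ (fun z => E z - E y₀) hHcne
  set g := E zg - E y₀ with hgdef
  have hzg_not : zg ∉ minimizers n E := (Finset.mem_filter.mp hzgmem).2
  have hg : 0 < g := by
    rcases lt_or_eq_of_le (hy₀ zg) with h | h
    · rw [hgdef]; linarith
    · exact absurd ((SA.mem_minimizers_iff' hy₀ zg).mpr h.symm) hzg_not
  have hgle : ∀ z, z ∉ minimizers n E → g ≤ E z - E y₀ := by
    intro z hz
    exact hzgmin z (by simp [hz])
  -- the energy span D above the minimum
  obtain ⟨zD, -, hzD⟩ :=
    Finset.exists_max_image Finset.univ (fun z => E z - E y₀) Finset.univ_nonempty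
  set D := E zD - E y₀ with hDdef
  have hD : ∀ z, E z - E y₀ ≤ D := fun z => hzD z (Finset.mem_univ z)
  have hD0 : 0 ≤ D := le_trans (by linarith [le_refl (E y₀)] : (0:ℝ) ≤ E y₀ - E y₀) (hD y₀)
  set Δ := energySpan n E with hΔdef
  have hnR : (0:ℝ) < (n:ℝ) := Nat.cast_pos.mpr hn
  have hT0 : 0 < T₀ := lt_trans (by positivity) hT₀
  -- the cooling schedule
  set bb : ℕ → ℝ := fun k => Real.log ((k + 1 : ℕ) : ℝ) / T₀ with hbbdef
  have hPbb : ∀ t, P t = gibbs n E (bb (t / n)) := fun t => rfl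
  have hcast : ∀ k : ℕ, ((k + 1 : ℕ) : ℝ) = (k : ℝ) + 1 := by intro k; push_cast; ring
  have hlogpos : ∀ k : ℕ, (0:ℝ) < ((k + 1 : ℕ) : ℝ) := by
    intro k; rw [hcast]; positivity
  have hlog0 : ∀ k : ℕ, 0 ≤ Real.log ((k + 1 : ℕ) : ℝ) := by
    intro k
    apply Real.log_nonneg
    rw [hcast]; linarith [Nat.cast_nonneg (α := ℝ) k]
  have hbb0 : ∀ k, 0 ≤ bb k := fun k => div_nonneg (hlog0 k) hT0.le
  have hbbmono : ∀ k l : ℕ, k ≤ l → bb k ≤ bb l := by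
    intro k l hkl
    have h1 : Real.log ((k + 1 : ℕ) : ℝ) ≤ Real.log ((l + 1 : ℕ) : ℝ) := by
      apply Real.log_le_log (hlogpos k)
      rw [hcast, hcast]
      have : (k:ℝ) ≤ (l:ℝ) := Nat.cast_le.mpr hkl
      linarith
    exact (div_le_div_iff_of_pos_right hT0).mpr h1
  -- basic objects
  have hspan : ∀ u (i : Fin n) (a b : A),
      |E (Function.update u i a) - E (Function.update u i b)| ≤ Δ :=
    fun u i a b => SA.energySpan_bound u i a b
  have hPstoch : ∀ t, SA.Stoch (P t) :=
    fun t => ⟨SA.gibbs_nonneg _, SA.gibbs_row_sum hn _⟩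
  set cardS : ℝ := (Fintype.card (Fin n → A) : ℝ) with hcardSdef
  have hcardS1 : (1:ℝ) ≤ cardS := by
    rw [hcardSdef]; exact_mod_cast Fintype.card_pos
  have hcardA : (0:ℝ) < (Fintype.card A : ℝ) := by exact_mod_cast Fintype.card_pos
  have hA : cardS = ((Fintype.card A : ℝ)) ^ n := by
    rw [hcardSdef]
    rw [show Fintype.card (Fin n → A) = Fintype.card A ^ n by
      rw [Fintype.card_fun, Fintype.card_fin]]
    push_cast
    ring
  set θ : ℕ → ℝ := fun k => Real.exp (-(bb k) * Δ) / ((Fintype.card A : ℝ) * n) with hθdef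
  have hθ0 : ∀ k, 0 ≤ θ k := by
    intro k
    apply div_nonneg (Real.exp_pos _).le
    positivity
  set Q : ℕ → Matrix (Fin n → A) (Fin n → A) ℝ :=
    fun k => Pprod P (k * n) ((k + 1) * n) with hQdef
  have hQpow : ∀ k, Q k = (gibbs n E (bb k)) ^ n := by
    intro k
    show Pprod P (k * n) ((k + 1) * n) = _
    rw [show (k + 1) * n = k * n + n by ring]
    apply SA.Pprod_eq_pow
    intro t ht
    have hdq : (k * n + t) / n = k := by
      apply Nat.div_eq_of_lt_le (Nat.le_add_right _ _)
      rw [show (k + 1) * n = k * n + n by ring]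
      exact Nat.add_lt_add_left ht _
    rw [hPbb, hdq]
  have hQstoch : ∀ k, SA.Stoch (Q k) := fun k => SA.Pprod_stoch P hPstoch _ _
  have hQlb : ∀ k (u v : Fin n → A), θ k ^ n ≤ Q k u v := by
    intro k u v
    rw [hQpow k]
    apply SA.pow_entry_lb ⟨SA.gibbs_nonneg _, SA.gibbs_row_sum hn _⟩ (hθ0 k)
      (fun u' i a => SA.gibbs_entry_lb hn (hbb0 k) hspan u' i a) n le_rfl u v
    intro j hj
    exact absurd j.isLt (not_lt.mpr hj)
  set π : ℕ → (Fin n → A) → ℝ := fun k => SA.gdist E (bb k) with hπdef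
  have hπdist : ∀ k, IsDist (π k) := by
    intro k
    constructor
    · exact (SA.gdist_isDist (E := E) hn (bb k)).1
    · exact (SA.gdist_isDist (E := E) hn (bb k)).2
  have hπstat : ∀ k, Matrix.vecMul (π k) (gibbs n E (bb k)) = π k :=
    fun k => SA.gdist_stationary hn (bb k)
  have hπQ : ∀ k, Matrix.vecMul (π k) (Q k) = π k := by
    intro k
    rw [hQpow k]
    exact SA.vecMul_pow_fixed (hπstat k) n
  set μs : ℕ → (Fin n → A) → ℝ := fun r => Matrix.vecMul μ₀ (Pprod P 0 r) with hμsdef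
  have hμsdist : ∀ r, IsDist (μs r) :=
    fun r => (SA.Pprod_stoch P hPstoch 0 r).isDist_vecMul hμ₀
  have hμsblock : ∀ k, μs ((k + 1) * n) = Matrix.vecMul (μs (k * n)) (Q k) := by
    intro k
    show Matrix.vecMul μ₀ (Pprod P 0 ((k + 1) * n)) = _
    rw [← SA.Pprod_mul P 0 (k * n) ((k + 1) * n) (Nat.zero_le _)
      (Nat.mul_le_mul_right n (Nat.le_succ k)), ← Matrix.vecMul_vecMul]
  set d : ℕ → ℝ := fun k => l1 (μs (k * n)) (π k) with hddef
  set ε : ℕ → ℝ := fun k => l1 (π k) (π (k + 1)) with hεdef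
  set aa : ℕ → ℝ := fun k => cardS * θ k ^ n with haadef
  set c : ℕ → ℝ := fun k => 1 - aa k with hcdef
  have hfact : ∀ k, aa k = (Real.exp (-(bb k) * Δ) / (n:ℝ)) ^ n := by
    intro k
    show cardS * θ k ^ n = _
    rw [hA]
    show ((Fintype.card A : ℝ)) ^ n
      * (Real.exp (-(bb k) * Δ) / ((Fintype.card A : ℝ) * n)) ^ n = _
    rw [div_pow, div_pow, mul_pow]
    field_simp
  have hexpbb1 : ∀ k, Real.exp (-(bb k) * Δ) ≤ 1 := by
    intro k
    apply Real.exp_le_one_iff.mpr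
    nlinarith [hbb0 k, hΔ.le]
  have haa0 : ∀ k, 0 ≤ aa k := by
    intro k
    rw [hfact k]
    positivity
  have haa1 : ∀ k, aa k ≤ 1 := by
    intro k
    rw [hfact k]
    apply pow_le_one₀ (by positivity)
    rw [div_le_one hnR]
    calc Real.exp (-(bb k) * Δ) ≤ 1 := hexpbb1 k
      _ ≤ (n:ℝ) := by exact_mod_cast hn
  have hc0 : ∀ k, 0 ≤ c k := fun k => by
    show 0 ≤ 1 - aa k
    linarith [haa1 k]
  have hc1 : ∀ k, c k ≤ 1 := fun k => by
    show 1 - aa k ≤ 1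
    linarith [haa0 k]
  have hd2 : ∀ k, d k ≤ 2 := fun k => SA.l1_dist_le_two (hμsdist _) (hπdist _)
  have hd0 : ∀ k, 0 ≤ d k := fun k => SA.l1_nonneg _ _
  have hεnn : ∀ k, 0 ≤ ε k := fun k => SA.l1_nonneg _ _
  -- the one-block recursion
  have hrec : ∀ k, d (k + 1) ≤ c k * d k + ε k := by
    intro k
    have htri : d (k + 1) ≤ l1 (μs ((k + 1) * n)) (π k) + ε k := SA.l1_triangle _ _ _
    have hcontr : l1 (μs ((k + 1) * n)) (π k) ≤ c k * d k := by
      rw [hμsblock k]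
      rw [← hπQ k]
      have hcontr' := SA.l1_contract (hQstoch k) (hQlb k)
        (μ := μs (k * n)) (ν := π k) (by rw [(hμsdist _).2, (hπdist _).2])
      calc l1 (Matrix.vecMul (μs (k * n)) (Q k)) (Matrix.vecMul (π k) (Q k))
          ≤ (1 - Fintype.card (Fin n → A) * θ k ^ n) * l1 (μs (k * n)) (π k) := hcontr'
        _ = c k * d k := by rw [hcdef, haadef, hcardSdef, hddef]
    linarith
  -- master estimate
  have hmaster : ∀ m k, m ≤ k →
      d k ≤ (∏ j ∈ Finset.Ico m k, c j) * 2 + ∑ j ∈ Finset.Ico m k, ε j := by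
    intro m k hmk
    induction k, hmk using Nat.le_induction with
    | base => simpa using hd2 m
    | succ k hmk ih =>
      have hsumnn : 0 ≤ ∑ j ∈ Finset.Ico m k, ε j :=
        Finset.sum_nonneg fun j _ => hεnn j
      have hprodnn : 0 ≤ ∏ j ∈ Finset.Ico m k, c j :=
        Finset.prod_nonneg fun j _ => hc0 j
      have h1 : c k * (∑ j ∈ Finset.Ico m k, ε j) ≤ ∑ j ∈ Finset.Ico m k, ε j := by
        nlinarith [hc1 k, hc0 k]
      calc d (k + 1) ≤ c k * d k + ε k := hrec k
        _ ≤ c k * ((∏ j ∈ Finset.Ico m k, c j) * 2 + ∑ j ∈ Finset.Ico m k, ε j) + ε k := by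
            have := mul_le_mul_of_nonneg_left ih (hc0 k)
            linarith
        _ ≤ (∏ j ∈ Finset.Ico m (k + 1), c j) * 2 + ∑ j ∈ Finset.Ico m (k + 1), ε j := by
            rw [Finset.prod_Ico_succ_top hmk, Finset.sum_Ico_succ_top hmk]
            nlinarith [h1]
  -- divergence of ∑ aa
  have haalb : ∀ j : ℕ, (1 / ((j:ℝ) + 1)) * (1 / (n:ℝ) ^ n) ≤ aa j := by
    intro j
    rw [hfact j, div_pow, ← Real.exp_nat_mul]
    have hkey : Real.exp (-(Real.log ((j + 1 : ℕ) : ℝ))) ≤ Real.exp ((n:ℝ) * (-(bb j) * Δ)) := by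
      apply Real.exp_le_exp.mpr
      have h1 : (n:ℝ) * (bb j * Δ) ≤ Real.log ((j + 1 : ℕ) : ℝ) := by
        rw [hbbdef]
        show (n:ℝ) * (Real.log ((j + 1 : ℕ) : ℝ) / T₀ * Δ) ≤ _
        rw [div_mul_eq_mul_div, mul_div_assoc']
        rw [div_le_iff₀ hT0]
        calc (n:ℝ) * (Real.log ((j + 1 : ℕ) : ℝ) * Δ)
            = ((n:ℝ) * Δ) * Real.log ((j + 1 : ℕ) : ℝ) := by ring
          _ ≤ T₀ * Real.log ((j + 1 : ℕ) : ℝ) := by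
              apply mul_le_mul_of_nonneg_right hT₀.le (hlog0 j)
          _ = Real.log ((j + 1 : ℕ) : ℝ) * T₀ := by ring
      nlinarith
    have hexplog : Real.exp (-(Real.log ((j + 1 : ℕ) : ℝ))) = 1 / ((j:ℝ) + 1) := by
      rw [Real.exp_neg, Real.exp_log (hlogpos j), hcast, one_div]
    rw [← hexplog]
    calc Real.exp (-Real.log ((j + 1 : ℕ) : ℝ)) * (1 / (n:ℝ) ^ n)
        ≤ Real.exp ((n:ℝ) * (-(bb j) * Δ)) * (1 / (n:ℝ) ^ n) := by
          apply mul_le_mul_of_nonneg_right hkey (by positivity)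
      _ = Real.exp ((n:ℝ) * (-(bb j) * Δ)) / (n:ℝ) ^ n := by ring
  have hprod0 : ∀ m, Tendsto (fun k => ∏ j ∈ Finset.Ico m k, c j) atTop (nhds 0) := by
    intro m
    have hub : ∀ k, (∏ j ∈ Finset.Ico m k, c j)
        ≤ Real.exp (-(∑ j ∈ Finset.Ico m k, aa j)) := by
      intro k
      rw [← Finset.sum_neg_distrib, Real.exp_sum]
      apply Finset.prod_le_prod (fun j _ => hc0 j)
      intro j _
      have := Real.add_one_le_exp (-(aa j))
      show 1 - aa j ≤ _
      linarith
    have hlb0 : ∀ k, 0 ≤ ∏ j ∈ Finset.Ico m k, c j :=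
      fun k => Finset.prod_nonneg fun j _ => hc0 j
    have hsum_top : Tendsto (fun k => ∑ j ∈ Finset.Ico m k, aa j) atTop atTop := by
      have h1 : Tendsto (fun k => (∑ j ∈ Finset.range k, (1:ℝ) / (j + 1)) * (1 / (n:ℝ) ^ n)
          + (-((∑ j ∈ Finset.range m, (1:ℝ) / (j + 1)) * (1 / (n:ℝ) ^ n)))) atTop atTop := by
        apply tendsto_atTop_add_const_right
        exact SA.harmonic_shift_tendsto.atTop_mul_const (by positivity)
      apply tendsto_atTop_mono' atTop _ h1
      filter_upwards [eventually_ge_atTop m] with k hk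
      have h2 : (∑ j ∈ Finset.range k, (1:ℝ) / (j + 1)) * (1 / (n:ℝ) ^ n)
          + (-((∑ j ∈ Finset.range m, (1:ℝ) / (j + 1)) * (1 / (n:ℝ) ^ n)))
          = ∑ j ∈ Finset.Ico m k, ((1:ℝ) / ((j:ℝ) + 1)) * (1 / (n:ℝ) ^ n) := by
        rw [← Finset.sum_mul, Finset.sum_Ico_eq_sub _ hk]
        ring
      calc (∑ j ∈ Finset.range k, (1:ℝ) / (j + 1)) * (1 / (n:ℝ) ^ n)
          + (-((∑ j ∈ Finset.range m, (1:ℝ) / (j + 1)) * (1 / (n:ℝ) ^ n)))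
          = ∑ j ∈ Finset.Ico m k, ((1:ℝ) / ((j:ℝ) + 1)) * (1 / (n:ℝ) ^ n) := h2
        _ ≤ ∑ j ∈ Finset.Ico m k, aa j := Finset.sum_le_sum (fun j _ => haalb j)
    have hcomp : Tendsto (fun k => Real.exp (-(∑ j ∈ Finset.Ico m k, aa j))) atTop (nhds 0) :=
      Real.tendsto_exp_atBot.comp (tendsto_neg_atTop_atBot.comp hsum_top)
    exact squeeze_zero hlb0 hub hcomp
  -- summability of ε
  have hεb : ∀ k : ℕ, ε k ≤ (cardS ^ 2 * D / T₀) * (((k:ℝ) + 1) ^ (-(g / T₀) - 1) : ℝ) := by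
    intro k
    have hlip := SA.gdist_lip hy₀ hgle (hbb0 k) (hbbmono k (k + 1) (Nat.le_succ k)) hD
    have hrp : Real.exp (-(bb k) * g) = ((k:ℝ) + 1) ^ (-(g / T₀) : ℝ) := by
      rw [Real.rpow_def_of_pos (by positivity), ← hcast k, hbbdef]
      congr 1
      show -(Real.log ((k + 1 : ℕ) : ℝ) / T₀) * g = _
      field_simp
    have hdb : bb (k + 1) - bb k ≤ 1 / (((k:ℝ) + 1) * T₀) := by
      have h3 : Real.log ((k + 1 + 1 : ℕ) : ℝ) - Real.log ((k + 1 : ℕ) : ℝ)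
          ≤ 1 / ((k:ℝ) + 1) := by
        rw [← Real.log_div (by positivity) (hlogpos k).ne']
        have h4 := Real.log_le_sub_one_of_pos
          (show (0:ℝ) < ((k + 1 + 1 : ℕ) : ℝ) / ((k + 1 : ℕ) : ℝ) by positivity)
        have h5 : ((k + 1 + 1 : ℕ) : ℝ) / ((k + 1 : ℕ) : ℝ) - 1 = 1 / ((k:ℝ) + 1) := by
          rw [hcast, hcast]
          push_cast
          field_simp
          ring
        linarith
      show Real.log ((k + 1 + 1 : ℕ) : ℝ) / T₀ - Real.log ((k + 1 : ℕ) : ℝ) / T₀ ≤ _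
      rw [div_sub_div_same, show 1 / (((k:ℝ) + 1) * T₀) = (1 / ((k:ℝ) + 1)) / T₀ from
        (div_div 1 ((k:ℝ) + 1) T₀).symm]
      exact (div_le_div_iff_of_pos_right hT0).mpr h3
    have hrpnn : (0:ℝ) ≤ ((k:ℝ) + 1) ^ (-(g / T₀) : ℝ) :=
      Real.rpow_nonneg (by positivity) _
    calc ε k ≤ cardS ^ 2 * D * Real.exp (-(bb k) * g) * (bb (k + 1) - bb k) := hlip
      _ ≤ cardS ^ 2 * D * (((k:ℝ) + 1) ^ (-(g / T₀) : ℝ)) * (1 / (((k:ℝ) + 1) * T₀)) := by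
          rw [hrp]
          apply mul_le_mul_of_nonneg_left hdb
          exact mul_nonneg (mul_nonneg (by positivity) hD0) hrpnn
      _ = (cardS ^ 2 * D / T₀) * (((k:ℝ) + 1) ^ (-(g / T₀) - 1 : ℝ)) := by
          rw [show (-(g / T₀) - 1 : ℝ) = -(g / T₀) + (-1) by ring,
            Real.rpow_add (by positivity : (0:ℝ) < (k:ℝ) + 1), Real.rpow_neg_one]
          rw [one_div, mul_inv]
          ring
  have hrsum : Summable (fun k : ℕ => ((k:ℝ) + 1) ^ (-(g / T₀) - 1 : ℝ)) := by
    have hgT : 0 < g / T₀ := div_pos hg hT0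
    have h1 : Summable (fun k : ℕ => ((k:ℝ)) ^ (-(g / T₀) - 1 : ℝ)) :=
      Real.summable_nat_rpow.mpr (by linarith)
    have h2 := (summable_nat_add_iff 1).mpr h1
    apply Summable.congr h2
    intro k
    norm_cast
  have hεsum : Summable ε :=
    Summable.of_nonneg_of_le hεnn hεb (hrsum.mul_left _)
  have hparts := hεsum.hasSum.tendsto_sum_nat
  -- d → 0
  have hdlim : Tendsto d atTop (nhds 0) := by
    rw [Metric.tendsto_atTop]
    intro η hη
    have htail : Tendsto (fun m => (∑' j, ε j) - ∑ j ∈ Finset.range m, ε j) atTop (nhds 0) := by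
      have h0 := (tendsto_const_nhds (x := ∑' j, ε j) (f := (atTop : Filter ℕ))).sub hparts
      simpa using h0
    obtain ⟨m, hm⟩ := (htail.eventually (gt_mem_nhds (by positivity : (0:ℝ) < η / 4))).exists
    have htailm : ∀ k, m ≤ k → ∑ j ∈ Finset.Ico m k, ε j < η / 4 := by
      intro k hk
      rw [Finset.sum_Ico_eq_sub _ hk]
      have h3 : ∑ j ∈ Finset.range k, ε j ≤ ∑' j, ε j :=
        Summable.sum_le_tsum _ (fun i _ => hεnn i) hεsum
      linarith
    have h4 : ∀ᶠ k in atTop, (∏ j ∈ Finset.Ico m k, c j) * 2 < η / 2 := by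
      have h5 := (hprod0 m).eventually (gt_mem_nhds (by positivity : (0:ℝ) < η / 4))
      filter_upwards [h5] with k hk5
      nlinarith [Finset.prod_nonneg (fun j (_ : j ∈ Finset.Ico m k) => hc0 j)]
    obtain ⟨N, hN⟩ := eventually_atTop.mp (h4.and (eventually_ge_atTop m))
    refine ⟨N, fun k hk => ?_⟩
    obtain ⟨hck, hmk⟩ := hN k hk
    have h6 := hmaster m k hmk
    have h7 := htailm k hmk
    rw [Real.dist_eq, sub_zero, abs_of_nonneg (hd0 k)]
    linarith
  -- closeness of π k to the uniform distribution
  have hπclose : ∀ k, l1 (π k) (uniformOnMinimizers n E)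
      ≤ cardS ^ 2 * Real.exp (-(bb k) * g) :=
    fun k => SA.gdist_close_uniform hy₀ hgle (hbb0 k)
  have hsb0 : Tendsto (fun k => cardS ^ 2 * Real.exp (-(bb k) * g)) atTop (nhds 0) := by
    have hbbtop : Tendsto bb atTop atTop := by
      apply Tendsto.atTop_div_const hT0
      exact Real.tendsto_log_atTop.comp
        (tendsto_natCast_atTop_atTop.comp (tendsto_add_atTop_nat 1))
    have hngtop : Tendsto (fun k => -(bb k) * g) atTop atBot := by
      have h2 := tendsto_neg_atTop_atBot.comp (hbbtop.atTop_mul_const hg)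
      have he : (fun k => -(bb k) * g) = (fun x : ℝ => -x) ∘ (fun k => bb k * g) := by
        funext k
        simp [neg_mul]
      rw [he]
      exact h2
    have hexp0 : Tendsto (fun k => Real.exp (-(bb k) * g)) atTop (nhds 0) :=
      Real.tendsto_exp_atBot.comp hngtop
    have h6 := hexp0.const_mul (cardS ^ 2)
    simpa using h6
  -- distance bound at arbitrary times
  have hkey : ∀ r, l1 (μs r) (uniformOnMinimizers n E)
      ≤ d (r / n) + cardS ^ 2 * Real.exp (-(bb (r / n)) * g) := by
    intro r
    have hk1 : (r / n) * n ≤ r := Nat.div_mul_le_self r n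
    have hk2 : r < ((r / n) + 1) * n := by
      calc r = n * (r / n) + r % n := (Nat.div_add_mod r n).symm
        _ < n * (r / n) + n := Nat.add_lt_add_left (Nat.mod_lt r hn) _
        _ = ((r / n) + 1) * n := by ring
    have hstat : Matrix.vecMul (π (r / n)) (Pprod P ((r / n) * n) r) = π (r / n) := by
      apply SA.vecMul_Pprod_fixed
      intro t ht1 ht2
      rw [hPbb t, Nat.div_eq_of_lt_le ht1 (lt_trans ht2 hk2)]
      exact hπstat (r / n)
    have h2 : μs r = Matrix.vecMul (μs ((r / n) * n)) (Pprod P ((r / n) * n) r) := by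
      show Matrix.vecMul μ₀ (Pprod P 0 r) = _
      rw [← SA.Pprod_mul P 0 ((r / n) * n) r (Nat.zero_le _) hk1, ← Matrix.vecMul_vecMul]
    calc l1 (μs r) (uniformOnMinimizers n E)
        ≤ l1 (μs r) (π (r / n)) + l1 (π (r / n)) (uniformOnMinimizers n E) :=
          SA.l1_triangle _ _ _
      _ ≤ d (r / n) + cardS ^ 2 * Real.exp (-(bb (r / n)) * g) := by
          apply add_le_add _ (hπclose (r / n))
          rw [h2]
          nth_rewrite 1 [← hstat]
          exact SA.l1_vecMul_le (SA.Pprod_stoch P hPstoch _ _)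
            (by rw [(hμsdist _).2, (hπdist _).2])
  have hdivtop : Tendsto (fun r : ℕ => r / n) atTop atTop := by
    apply tendsto_atTop_atTop.mpr
    intro b
    exact ⟨b * n, fun r hr => (Nat.le_div_iff_mul_le hn).mpr hr⟩
  have hmain : Tendsto (fun r => l1 (μs r) (uniformOnMinimizers n E)) atTop (nhds 0) := by
    apply squeeze_zero (fun r => SA.l1_nonneg _ _) hkey
    have h9 := (hdlim.comp hdivtop).add (hsb0.comp hdivtop)
    simpa using h9
  constructor
  · exact hmain
  · have hsumH : ∀ r, |(∑ y ∈ minimizers n E, μs r y) - 1|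
        ≤ l1 (μs r) (uniformOnMinimizers n E) := by
      intro r
      have h1 : (∑ y ∈ minimizers n E, uniformOnMinimizers n E y) = 1 := by
        have h1' : ∀ y ∈ minimizers n E, uniformOnMinimizers n E y
            = 1 / ((minimizers n E).card : ℝ) := by
          intro y hy
          simp [uniformOnMinimizers, hy]
        rw [Finset.sum_congr rfl h1', Finset.sum_const, nsmul_eq_mul, mul_one_div,
          div_self (SA.card_min_pos hy₀).ne']
      calc |(∑ y ∈ minimizers n E, μs r y) - 1|
          = |∑ y ∈ minimizers n E, (μs r y - uniformOnMinimizers n E y)| := by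
            rw [Finset.sum_sub_distrib, h1]
        _ ≤ ∑ y ∈ minimizers n E, |μs r y - uniformOnMinimizers n E y| :=
            Finset.abs_sum_le_sum_abs _ _
        _ ≤ ∑ y : Fin n → A, |μs r y - uniformOnMinimizers n E y| :=
            Finset.sum_le_sum_of_subset_of_nonneg (Finset.subset_univ _)
              (fun _ _ _ => abs_nonneg _)
        _ = l1 (μs r) (uniformOnMinimizers n E) := rfl
    have h2 : Tendsto (fun r => (∑ y ∈ minimizers n E, μs r y) - 1) atTop (nhds 0) :=
      squeeze_zero_norm hsumH hmain
    have h3 := h2.add_const 1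
    simpa using h3
end
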